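/- arXiv:1810.03427 — 3 statements merged into one kernel-verified Lean document; each statement's English description precedes it below -/
import Mathlib

section
/- If α_n ≤ ε for ε ∈ (0,1), then the type-II error exponent satisfies -(1/n) log β_n ≤ (1/(n(1-ε))) D(P_Ĥ|H || P_Ĥ|H̄) + (1/(n(1-ε))) h₂(α_n). -/
open Finset Real Filter
open scoped Classical BigOperators

noncomputable section

/-- `p` is a probability mass function on the finite type `α`. -/
def IsPMF {α : Type*} [Fintype α] (p : α → ℝ) : Prop :=
  (∀ a, 0 ≤ p a) ∧ ∑ a, p a = 1

/-- Kullback-Leibler divergence between two pmfs on a finite type. -/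
def klD {α : Type*} [Fintype α] (p q : α → ℝ) : ℝ :=
  ∑ a, p a * Real.log (p a / q a)

/-- Distribution (pushforward) of the random variable `f` under pmf `μ`. -/
def pdist {Ω α : Type*} [Fintype Ω] (μ : Ω → ℝ) (f : Ω → α) : α → ℝ :=
  fun a => ∑ ω, if f ω = a then μ ω else 0

/-- Shannon entropy (nats) of the random variable `f` under `μ`. -/
def entOf {Ω α : Type*} [Fintype Ω] [Fintype α] (μ : Ω → ℝ) (f : Ω → α) : ℝ :=
  -∑ a, pdist μ f a * Real.log (pdist μ f a)

/-- Mutual information `I(f; g)` under `μ`. -/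
def miOf {Ω α β : Type*} [Fintype Ω] [Fintype α] [Fintype β]
    (μ : Ω → ℝ) (f : Ω → α) (g : Ω → β) : ℝ :=
  entOf μ f + entOf μ g - entOf μ (fun ω => (f ω, g ω))

/-- Conditional mutual information `I(f; g | h)` under `μ`. -/
def cmiOf {Ω α β γ : Type*} [Fintype Ω] [Fintype α] [Fintype β] [Fintype γ]
    (μ : Ω → ℝ) (f : Ω → α) (g : Ω → β) (h : Ω → γ) : ℝ :=
  entOf μ (fun ω => (f ω, h ω)) + entOf μ (fun ω => (g ω, h ω))
    - entOf μ (fun ω => (f ω, g ω, h ω)) - entOf μ h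

/-- Binary entropy function. -/
def binEnt (p : ℝ) : ℝ := -(p * Real.log p) - (1 - p) * Real.log (1 - p)

/-- If the type-I error `αn ≤ ε` with `ε ∈ (0,1)`, then the
type-II error exponent satisfies
`-(1/n) log βn ≤ (1/(n(1-ε))) D(P_Ĥ|H ‖ P_Ĥ|H̄) + (1/(n(1-ε))) h₂(αn)`. -/
theorem stmt_1 (n : ℕ) (hn : 0 < n) (ε αn βn : ℝ)
    (hε : ε ∈ Set.Ioo (0:ℝ) 1) (hα : αn ∈ Set.Ioo (0:ℝ) 1) (hβ : βn ∈ Set.Ioo (0:ℝ) 1)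
    (hαε : αn ≤ ε) :
    -(1 / (n : ℝ)) * Real.log βn
      ≤ (1 / ((n : ℝ) * (1 - ε))) *
          klD (fun d : Bool => if d then αn else 1 - αn)
              (fun d : Bool => if d then 1 - βn else βn)
        + (1 / ((n : ℝ) * (1 - ε))) * binEnt αn := by
  obtain ⟨hε0, hε1⟩ := hε
  obtain ⟨hα0, hα1⟩ := hα
  obtain ⟨hβ0, hβ1⟩ := hβ
  have hc : Real.log βn < 0 := Real.log_neg hβ0 hβ1
  have hd : Real.log (1 - βn) ≤ 0 := Real.log_nonpos (by linarith) (by linarith)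
  have hD : klD (fun d : Bool => if d then αn else 1 - αn)
      (fun d : Bool => if d then 1 - βn else βn)
      = αn * (Real.log αn - Real.log (1 - βn))
        + (1 - αn) * (Real.log (1 - αn) - Real.log βn) := by
    simp only [klD, Fintype.sum_bool, if_pos rfl, if_neg Bool.false_ne_true, if_true]
    have e1 : Real.log (αn / (1 - βn)) = Real.log αn - Real.log (1 - βn) :=
      Real.log_div (by linarith) (by linarith)
    have e2 : Real.log ((1 - αn) / βn) = Real.log (1 - αn) - Real.log βn :=
      Real.log_div (by linarith) (by linarith)
    rw [e1, e2]; try ring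
  rw [hD, binEnt]
  have hn' : (0:ℝ) < n := Nat.cast_pos.mpr hn
  have h1ε : (0:ℝ) < 1 - ε := by linarith
  rw [div_mul_eq_mul_div, div_mul_eq_mul_div, one_mul, one_mul, ← add_div,
    show -(1/(n:ℝ)) * Real.log βn = -Real.log βn / n by ring,
    div_le_div_iff₀ hn' (by positivity)]
  have key : (ε - αn) * Real.log βn ≤ -(αn * Real.log (1 - βn)) :=
    le_trans (mul_nonpos_of_nonneg_of_nonpos (by linarith) hc.le)
      (by nlinarith [mul_nonpos_of_nonneg_of_nonpos hα0.le hd])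
  nlinarith [mul_le_mul_of_nonneg_left key hn'.le, hn'.le, hc.le]
end
end

section
/- Let (X^n, Y^n) be i.i.d. pairs and M = φ(X^n) a function of X^n. Then I(Y^n; M) ≤ Σ_{k=1}^n I(Y_k; U_k) where U_k = (M, X^{k-1}), and moreover the Markov chain Y^{k-1} — (M, X^{k-1}) — Y_k holds for each k. -/
open Finset Real Filter
open scoped Classical BigOperators

set_option linter.unusedSectionVars false
set_option maxHeartbeats 1000000
noncomputable section

section Aux
variable {Ω α β γ δ : Type*} [Fintype Ω] [Fintype α] [Fintype β] [Fintype γ] [Fintype δ]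
variable {μ : Ω → ℝ} {f : Ω → α} {g : Ω → β} {h : Ω → γ}

lemma pdist_nonneg {μ : Ω → ℝ} (hμ : ∀ ω, 0 ≤ μ ω) (f : Ω → α) (a : α) :
    0 ≤ pdist μ f a :=
  Finset.sum_nonneg fun ω _ => by
    by_cases h : f ω = a <;> simp [pdist, h, hμ ω]

lemma sum_pdist (μ : Ω → ℝ) (f : Ω → α) : ∑ a, pdist μ f a = ∑ ω, μ ω := by
  unfold pdist
  rw [Finset.sum_comm]
  exact Finset.sum_congr rfl fun ω _ => by simp

lemma pdist_comp_inj {μ : Ω → ℝ} {e : α → β} (he : Function.Injective e) (f : Ω → α) (a : α) :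
    pdist μ (fun ω => e (f ω)) (e a) = pdist μ f a := by
  unfold pdist; exact Finset.sum_congr rfl fun ω _ => by simp [he.eq_iff]

lemma entOf_comp_inj {μ : Ω → ℝ} {e : α → β} (he : Function.Injective e) (f : Ω → α) :
    entOf μ (fun ω => e (f ω)) = entOf μ f := by
  unfold entOf
  congr 1
  rw [← Finset.sum_subset (Finset.subset_univ ((Finset.univ : Finset α).image e))]
  · rw [Finset.sum_image (fun a _ b _ h => he h)]
    exact Finset.sum_congr rfl fun a _ => by rw [pdist_comp_inj he]
  · intro b _ hb
    have h0 : pdist μ (fun ω => e (f ω)) b = 0 := by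
      unfold pdist
      refine Finset.sum_eq_zero fun ω _ => ?_
      rw [if_neg]
      exact fun h => hb (Finset.mem_image.2 ⟨f ω, Finset.mem_univ _, h⟩)
    simp [h0]

lemma entOf_congr {μ : Ω → ℝ} (f : Ω → α) (g : Ω → β) (u : α → β) (v : β → α)
    (hu : ∀ ω, u (f ω) = g ω) (hv : ∀ ω, v (g ω) = f ω) :
    entOf μ f = entOf μ g := by
  have h1 : entOf μ (fun ω => (f ω, g ω)) = entOf μ f := by
    have h := entOf_comp_inj (μ := μ) (e := fun a : α => (a, u a))
      (fun a b h => congrArg Prod.fst h) f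
    simp only [hu] at h
    exact h
  have h2 : entOf μ (fun ω => (g ω, f ω)) = entOf μ g := by
    have h := entOf_comp_inj (μ := μ) (e := fun b : β => (b, v b))
      (fun a b h => congrArg Prod.fst h) g
    simp only [hv] at h
    exact h
  have h3 : entOf μ (fun ω => (g ω, f ω)) = entOf μ (fun ω => (f ω, g ω)) :=
    entOf_comp_inj (e := Prod.swap) Prod.swap_injective (fun ω => (f ω, g ω))
  rw [← h1, ← h3, h2]

lemma pdist_const {μ : Ω → ℝ} (c : α) (a : α) :
    pdist μ (fun _ => c) a = if c = a then ∑ ω, μ ω else 0 := by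
  unfold pdist; by_cases h : c = a <;> simp [h]

lemma entOf_const {μ : Ω → ℝ} (hμ : ∑ ω, μ ω = 1) (c : α) :
    entOf μ (fun _ => c) = 0 := by
  unfold entOf
  rw [neg_eq_zero]
  refine Finset.sum_eq_zero fun a _ => ?_
  rw [pdist_const c a]
  by_cases h : c = a <;> simp [h, hμ]


lemma pdist_m13 (a : α) (c : γ) :
    pdist μ (fun ω => (f ω, h ω)) (a, c)
      = ∑ b, pdist μ (fun ω => (f ω, g ω, h ω)) (a, b, c) := by
  unfold pdist
  rw [Finset.sum_comm]
  refine Finset.sum_congr rfl fun ω _ => ?_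
  by_cases h1 : f ω = a <;> by_cases h2 : h ω = c <;>
    simp [Prod.ext_iff, h1, h2]

lemma pdist_m23 (b : β) (c : γ) :
    pdist μ (fun ω => (g ω, h ω)) (b, c)
      = ∑ a, pdist μ (fun ω => (f ω, g ω, h ω)) (a, b, c) := by
  unfold pdist
  rw [Finset.sum_comm]
  refine Finset.sum_congr rfl fun ω _ => ?_
  by_cases h1 : g ω = b <;> by_cases h2 : h ω = c <;>
    simp [Prod.ext_iff, h1, h2]

lemma pdist_m3 (c : γ) :
    pdist μ h c = ∑ a, ∑ b, pdist μ (fun ω => (f ω, g ω, h ω)) (a, b, c) := by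
  unfold pdist
  refine Eq.trans (Finset.sum_congr rfl fun ω _ => ?_)
    (Eq.trans Finset.sum_comm (Finset.sum_congr rfl fun a _ => Finset.sum_comm))
  by_cases h2 : h ω = c <;>
    simp [Prod.ext_iff, h2, ite_and, Finset.sum_ite_eq, Finset.sum_ite_eq']


lemma cmi_expand :
    cmiOf μ f g h = ∑ a, ∑ b, ∑ c,
      pdist μ (fun ω => (f ω, g ω, h ω)) (a, b, c) *
        (Real.log (pdist μ (fun ω => (f ω, g ω, h ω)) (a, b, c))
          + Real.log (pdist μ h c)
          - Real.log (pdist μ (fun ω => (f ω, h ω)) (a, c))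
          - Real.log (pdist μ (fun ω => (g ω, h ω)) (b, c))) := by
  have h3 : entOf μ (fun ω => (f ω, g ω, h ω))
      = -∑ a, ∑ b, ∑ c, pdist μ (fun ω => (f ω, g ω, h ω)) (a, b, c) *
          Real.log (pdist μ (fun ω => (f ω, g ω, h ω)) (a, b, c)) := by
    unfold entOf
    simp only [Fintype.sum_prod_type]
  have h4 : entOf μ h
      = -∑ a, ∑ b, ∑ c, pdist μ (fun ω => (f ω, g ω, h ω)) (a, b, c) *
          Real.log (pdist μ h c) := by
    unfold entOf
    congr 1
    calc ∑ c, pdist μ h c * Real.log (pdist μ h c)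
        = ∑ c, ∑ a, ∑ b, pdist μ (fun ω => (f ω, g ω, h ω)) (a, b, c) *
            Real.log (pdist μ h c) := by
          refine Finset.sum_congr rfl fun c _ => ?_
          nth_rewrite 1 [pdist_m3 (μ := μ) (f := f) (g := g) (h := h) c]
          rw [Finset.sum_mul]
          exact Finset.sum_congr rfl fun a _ => Finset.sum_mul _ _ _
      _ = ∑ a, ∑ c, ∑ b, pdist μ (fun ω => (f ω, g ω, h ω)) (a, b, c) *
            Real.log (pdist μ h c) := Finset.sum_comm
      _ = ∑ a, ∑ b, ∑ c, pdist μ (fun ω => (f ω, g ω, h ω)) (a, b, c) *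
            Real.log (pdist μ h c) := Finset.sum_congr rfl fun a _ => Finset.sum_comm
  have h1 : entOf μ (fun ω => (f ω, h ω))
      = -∑ a, ∑ b, ∑ c, pdist μ (fun ω => (f ω, g ω, h ω)) (a, b, c) *
          Real.log (pdist μ (fun ω => (f ω, h ω)) (a, c)) := by
    unfold entOf
    congr 1
    rw [Fintype.sum_prod_type]
    refine Finset.sum_congr rfl fun a _ => ?_
    calc ∑ c, pdist μ (fun ω => (f ω, h ω)) (a, c) *
            Real.log (pdist μ (fun ω => (f ω, h ω)) (a, c))
        = ∑ c, ∑ b, pdist μ (fun ω => (f ω, g ω, h ω)) (a, b, c) *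
            Real.log (pdist μ (fun ω => (f ω, h ω)) (a, c)) := by
          refine Finset.sum_congr rfl fun c _ => ?_
          nth_rewrite 1 [pdist_m13 (μ := μ) (f := f) (g := g) (h := h) a c]
          exact Finset.sum_mul _ _ _
      _ = ∑ b, ∑ c, pdist μ (fun ω => (f ω, g ω, h ω)) (a, b, c) *
            Real.log (pdist μ (fun ω => (f ω, h ω)) (a, c)) := Finset.sum_comm
  have h2 : entOf μ (fun ω => (g ω, h ω))
      = -∑ a, ∑ b, ∑ c, pdist μ (fun ω => (f ω, g ω, h ω)) (a, b, c) *
          Real.log (pdist μ (fun ω => (g ω, h ω)) (b, c)) := by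
    unfold entOf
    congr 1
    rw [Fintype.sum_prod_type]
    calc ∑ b, ∑ c, pdist μ (fun ω => (g ω, h ω)) (b, c) *
            Real.log (pdist μ (fun ω => (g ω, h ω)) (b, c))
        = ∑ b, ∑ c, ∑ a, pdist μ (fun ω => (f ω, g ω, h ω)) (a, b, c) *
            Real.log (pdist μ (fun ω => (g ω, h ω)) (b, c)) := by
          refine Finset.sum_congr rfl fun b _ => Finset.sum_congr rfl fun c _ => ?_
          nth_rewrite 1 [pdist_m23 (μ := μ) (f := f) (g := g) (h := h) b c]
          exact Finset.sum_mul _ _ _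
      _ = ∑ b, ∑ a, ∑ c, pdist μ (fun ω => (f ω, g ω, h ω)) (a, b, c) *
            Real.log (pdist μ (fun ω => (g ω, h ω)) (b, c)) :=
          Finset.sum_congr rfl fun b _ => Finset.sum_comm
      _ = ∑ a, ∑ b, ∑ c, pdist μ (fun ω => (f ω, g ω, h ω)) (a, b, c) *
            Real.log (pdist μ (fun ω => (g ω, h ω)) (b, c)) := Finset.sum_comm
  unfold cmiOf
  rw [h1, h2, h3, h4]
  simp only [mul_add, mul_sub, Finset.sum_add_distrib, Finset.sum_sub_distrib]
  ring


lemma klterm {p pc pac pbc : ℝ} (hp : 0 ≤ p) (h1 : p ≤ pac) (h2 : p ≤ pbc) (h3 : p ≤ pc) :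
    p - pac * pbc / pc ≤ p * (Real.log p + Real.log pc - Real.log pac - Real.log pbc) := by
  rcases eq_or_lt_of_le hp with hp0 | hp0
  · have hq : 0 ≤ pac * pbc / pc :=
      div_nonneg (mul_nonneg (by linarith) (by linarith)) (by linarith)
    rw [← hp0]
    simpa using hq
  · have hac : 0 < pac := lt_of_lt_of_le hp0 h1
    have hbc : 0 < pbc := lt_of_lt_of_le hp0 h2
    have hc : 0 < pc := lt_of_lt_of_le hp0 h3
    set q : ℝ := pac * pbc / pc with hqdef
    have hq : 0 < q := by positivity
    have hlogq : Real.log q = Real.log pac + Real.log pbc - Real.log pc := by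
      rw [hqdef, Real.log_div (by positivity) (ne_of_gt hc), Real.log_mul (ne_of_gt hac) (ne_of_gt hbc)]
    have hlog : Real.log (q / p) ≤ q / p - 1 := Real.log_le_sub_one_of_pos (by positivity)
    have hlog2 : Real.log (q / p) = Real.log q - Real.log p :=
      Real.log_div (ne_of_gt hq) (ne_of_gt hp0)
    have hmul : p * Real.log (q / p) ≤ p * (q / p - 1) :=
      mul_le_mul_of_nonneg_left hlog hp
    have hqp : p * (q / p) = q := by field_simp
    have : Real.log p + Real.log pc - Real.log pac - Real.log pbc
        = -(Real.log q - Real.log p) := by rw [hlogq]; ring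
    rw [this]
    nlinarith [hmul, hqp]

lemma cmi_nonneg (hμnn : ∀ ω, 0 ≤ μ ω) (hμ1 : ∑ ω, μ ω = 1) :
    0 ≤ cmiOf μ f g h := by
  have hPnn : ∀ t, 0 ≤ pdist μ (fun ω => (f ω, g ω, h ω)) t := pdist_nonneg hμnn _
  have hle13 : ∀ a b c, pdist μ (fun ω => (f ω, g ω, h ω)) (a, b, c)
      ≤ pdist μ (fun ω => (f ω, h ω)) (a, c) := fun a b c =>
    calc pdist μ (fun ω => (f ω, g ω, h ω)) (a, b, c)
        ≤ ∑ b', pdist μ (fun ω => (f ω, g ω, h ω)) (a, b', c) :=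
          Finset.single_le_sum
            (f := fun b' => pdist μ (fun ω => (f ω, g ω, h ω)) (a, b', c))
            (fun b' _ => hPnn _) (Finset.mem_univ b)
      _ = pdist μ (fun ω => (f ω, h ω)) (a, c) := (pdist_m13 a c).symm
  have hle23 : ∀ a b c, pdist μ (fun ω => (f ω, g ω, h ω)) (a, b, c)
      ≤ pdist μ (fun ω => (g ω, h ω)) (b, c) := fun a b c =>
    calc pdist μ (fun ω => (f ω, g ω, h ω)) (a, b, c)
        ≤ ∑ a', pdist μ (fun ω => (f ω, g ω, h ω)) (a', b, c) :=
          Finset.single_le_sum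
            (f := fun a' => pdist μ (fun ω => (f ω, g ω, h ω)) (a', b, c))
            (fun a' _ => hPnn _) (Finset.mem_univ a)
      _ = pdist μ (fun ω => (g ω, h ω)) (b, c) := (pdist_m23 b c).symm
  have hle3 : ∀ a b c, pdist μ (fun ω => (f ω, g ω, h ω)) (a, b, c) ≤ pdist μ h c := by
    intro a b c
    calc pdist μ (fun ω => (f ω, g ω, h ω)) (a, b, c)
        ≤ ∑ b', pdist μ (fun ω => (f ω, g ω, h ω)) (a, b', c) :=
          Finset.single_le_sum
            (f := fun b' => pdist μ (fun ω => (f ω, g ω, h ω)) (a, b', c))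
            (fun b' _ => hPnn _) (Finset.mem_univ b)
      _ ≤ ∑ a', ∑ b', pdist μ (fun ω => (f ω, g ω, h ω)) (a', b', c) :=
          Finset.single_le_sum
            (f := fun a' => ∑ b', pdist μ (fun ω => (f ω, g ω, h ω)) (a', b', c))
            (fun a' _ => Finset.sum_nonneg fun b' _ => hPnn _)
            (Finset.mem_univ a)
      _ = pdist μ h c := (pdist_m3 c).symm
  have hmargA : ∀ c, ∑ a, pdist μ (fun ω => (f ω, h ω)) (a, c) = pdist μ h c := by
    intro c
    calc ∑ a, pdist μ (fun ω => (f ω, h ω)) (a, c)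
        = ∑ a, ∑ b, pdist μ (fun ω => (f ω, g ω, h ω)) (a, b, c) :=
          Finset.sum_congr rfl fun a _ => pdist_m13 a c
      _ = pdist μ h c := (pdist_m3 c).symm
  have hmargB : ∀ c, ∑ b, pdist μ (fun ω => (g ω, h ω)) (b, c) = pdist μ h c := by
    intro c
    calc ∑ b, pdist μ (fun ω => (g ω, h ω)) (b, c)
        = ∑ b, ∑ a, pdist μ (fun ω => (f ω, g ω, h ω)) (a, b, c) :=
          Finset.sum_congr rfl fun b _ => pdist_m23 b c
      _ = ∑ a, ∑ b, pdist μ (fun ω => (f ω, g ω, h ω)) (a, b, c) := Finset.sum_comm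
      _ = pdist μ h c := (pdist_m3 c).symm
  have sumP : ∑ a, ∑ b, ∑ c, pdist μ (fun ω => (f ω, g ω, h ω)) (a, b, c) = 1 := by
    have := sum_pdist μ (fun ω => (f ω, g ω, h ω))
    simp only [Fintype.sum_prod_type] at this
    calc ∑ a, ∑ b, ∑ c, pdist μ (fun ω => (f ω, g ω, h ω)) (a, b, c)
        = ∑ a, ∑ b, ∑ c, pdist μ (fun ω => (f ω, g ω, h ω)) (a, b, c) := rfl
      _ = ∑ ω, μ ω := this
      _ = 1 := hμ1
  have sumQ : ∑ a, ∑ b, ∑ c, pdist μ (fun ω => (f ω, h ω)) (a, c) *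
      pdist μ (fun ω => (g ω, h ω)) (b, c) / pdist μ h c = 1 := by
    calc ∑ a, ∑ b, ∑ c, pdist μ (fun ω => (f ω, h ω)) (a, c) *
          pdist μ (fun ω => (g ω, h ω)) (b, c) / pdist μ h c
        = ∑ a, ∑ c, ∑ b, pdist μ (fun ω => (f ω, h ω)) (a, c) *
          pdist μ (fun ω => (g ω, h ω)) (b, c) / pdist μ h c :=
          Finset.sum_congr rfl fun a _ => Finset.sum_comm
      _ = ∑ c, ∑ a, ∑ b, pdist μ (fun ω => (f ω, h ω)) (a, c) *
          pdist μ (fun ω => (g ω, h ω)) (b, c) / pdist μ h c := Finset.sum_comm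
      _ = ∑ c, pdist μ h c := by
          refine Finset.sum_congr rfl fun c _ => ?_
          have : ∑ a, ∑ b, pdist μ (fun ω => (f ω, h ω)) (a, c) *
              pdist μ (fun ω => (g ω, h ω)) (b, c) / pdist μ h c
              = (∑ a, pdist μ (fun ω => (f ω, h ω)) (a, c)) *
                (∑ b, pdist μ (fun ω => (g ω, h ω)) (b, c)) / pdist μ h c := by
            rw [Finset.sum_mul, Finset.sum_div]
            refine Finset.sum_congr rfl fun a _ => ?_
            rw [Finset.mul_sum, Finset.sum_div]
          rw [this, hmargA, hmargB]
          by_cases hc : pdist μ h c = 0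
          · simp [hc]
          · field_simp
      _ = 1 := by rw [sum_pdist, hμ1]
  rw [cmi_expand]
  have key : ∀ a b c,
      pdist μ (fun ω => (f ω, g ω, h ω)) (a, b, c) -
        pdist μ (fun ω => (f ω, h ω)) (a, c) *
          pdist μ (fun ω => (g ω, h ω)) (b, c) / pdist μ h c
      ≤ pdist μ (fun ω => (f ω, g ω, h ω)) (a, b, c) *
        (Real.log (pdist μ (fun ω => (f ω, g ω, h ω)) (a, b, c))
          + Real.log (pdist μ h c)
          - Real.log (pdist μ (fun ω => (f ω, h ω)) (a, c))
          - Real.log (pdist μ (fun ω => (g ω, h ω)) (b, c))) :=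
    fun a b c => klterm (hPnn _) (hle13 a b c) (hle23 a b c) (hle3 a b c)
  have hsum : (∑ a, ∑ b, ∑ c, (pdist μ (fun ω => (f ω, g ω, h ω)) (a, b, c) -
      pdist μ (fun ω => (f ω, h ω)) (a, c) *
        pdist μ (fun ω => (g ω, h ω)) (b, c) / pdist μ h c))
      ≤ ∑ a, ∑ b, ∑ c, pdist μ (fun ω => (f ω, g ω, h ω)) (a, b, c) *
        (Real.log (pdist μ (fun ω => (f ω, g ω, h ω)) (a, b, c))
          + Real.log (pdist μ h c)
          - Real.log (pdist μ (fun ω => (f ω, h ω)) (a, c))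
          - Real.log (pdist μ (fun ω => (g ω, h ω)) (b, c))) :=
    Finset.sum_le_sum fun a _ => Finset.sum_le_sum fun b _ =>
      Finset.sum_le_sum fun c _ => key a b c
  refine le_trans (le_of_eq ?_) hsum
  simp only [Finset.sum_sub_distrib]
  rw [sumP, sumQ]
  ring

lemma cmi_eq_zero (hμnn : ∀ ω, 0 ≤ μ ω)
    (hind : ∀ a b c, pdist μ (fun ω => (f ω, g ω, h ω)) (a, b, c) * pdist μ h c
      = pdist μ (fun ω => (f ω, h ω)) (a, c) * pdist μ (fun ω => (g ω, h ω)) (b, c)) :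
    cmiOf μ f g h = 0 := by
  have hPnn : ∀ t, 0 ≤ pdist μ (fun ω => (f ω, g ω, h ω)) t := pdist_nonneg hμnn _
  have hle3 : ∀ a b c, pdist μ (fun ω => (f ω, g ω, h ω)) (a, b, c) ≤ pdist μ h c := by
    intro a b c
    calc pdist μ (fun ω => (f ω, g ω, h ω)) (a, b, c)
        ≤ ∑ b', pdist μ (fun ω => (f ω, g ω, h ω)) (a, b', c) :=
          Finset.single_le_sum
            (f := fun b' => pdist μ (fun ω => (f ω, g ω, h ω)) (a, b', c))
            (fun b' _ => hPnn _) (Finset.mem_univ b)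
      _ ≤ ∑ a', ∑ b', pdist μ (fun ω => (f ω, g ω, h ω)) (a', b', c) :=
          Finset.single_le_sum
            (f := fun a' => ∑ b', pdist μ (fun ω => (f ω, g ω, h ω)) (a', b', c))
            (fun a' _ => Finset.sum_nonneg fun b' _ => hPnn _)
            (Finset.mem_univ a)
      _ = pdist μ h c := (pdist_m3 c).symm
  rw [cmi_expand]
  refine Finset.sum_eq_zero fun a _ => Finset.sum_eq_zero fun b _ =>
    Finset.sum_eq_zero fun c _ => ?_
  rcases eq_or_lt_of_le (hPnn (a, b, c)) with hp0 | hp0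
  · rw [← hp0, zero_mul]
  · have hc : 0 < pdist μ h c := lt_of_lt_of_le hp0 (hle3 a b c)
    have hprod : 0 < pdist μ (fun ω => (f ω, h ω)) (a, c) *
        pdist μ (fun ω => (g ω, h ω)) (b, c) := by
      rw [← hind a b c]; positivity
    have hac : 0 < pdist μ (fun ω => (f ω, h ω)) (a, c) := by
      rcases lt_or_eq_of_le (pdist_nonneg hμnn (fun ω => (f ω, h ω)) (a, c)) with h' | h'
      · exact h'
      · exfalso; rw [← h'] at hprod; simp at hprod
    have hbc : 0 < pdist μ (fun ω => (g ω, h ω)) (b, c) := by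
      rcases lt_or_eq_of_le (pdist_nonneg hμnn (fun ω => (g ω, h ω)) (b, c)) with h' | h'
      · exact h'
      · exfalso; rw [← h'] at hprod; simp at hprod
    have hzero : Real.log (pdist μ (fun ω => (f ω, g ω, h ω)) (a, b, c))
        + Real.log (pdist μ h c)
        - Real.log (pdist μ (fun ω => (f ω, h ω)) (a, c))
        - Real.log (pdist μ (fun ω => (g ω, h ω)) (b, c)) = 0 := by
      have e1 : Real.log (pdist μ (fun ω => (f ω, g ω, h ω)) (a, b, c))
          + Real.log (pdist μ h c)
          = Real.log (pdist μ (fun ω => (f ω, g ω, h ω)) (a, b, c) * pdist μ h c) :=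
        (Real.log_mul (ne_of_gt hp0) (ne_of_gt hc)).symm
      have e2 : Real.log (pdist μ (fun ω => (f ω, h ω)) (a, c))
          + Real.log (pdist μ (fun ω => (g ω, h ω)) (b, c))
          = Real.log (pdist μ (fun ω => (f ω, h ω)) (a, c) *
              pdist μ (fun ω => (g ω, h ω)) (b, c)) :=
        (Real.log_mul (ne_of_gt hac) (ne_of_gt hbc)).symm
      rw [sub_sub, e1, e2, hind a b c, sub_self]
    rw [hzero, mul_zero]


lemma cmi_symm : cmiOf μ f g h = cmiOf μ g f h := by
  unfold cmiOf
  rw [entOf_congr (μ := μ) (fun ω => (f ω, g ω, h ω)) (fun ω => (g ω, f ω, h ω))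
    (fun t => (t.2.1, t.1, t.2.2)) (fun t => (t.2.1, t.1, t.2.2))
    (fun _ => rfl) (fun _ => rfl)]
  ring

lemma miOf_eq_cmi_unit (hμ1 : ∑ ω, μ ω = 1) :
    miOf μ f g = cmiOf μ f g (fun _ => (() : Unit)) := by
  unfold miOf cmiOf
  rw [show entOf μ (fun ω => (f ω, (fun _ : Ω => ()) ω)) = entOf μ f from
    entOf_congr _ _ Prod.fst (fun a => (a, ())) (fun _ => rfl) (fun _ => rfl)]
  rw [show entOf μ (fun ω => (g ω, (fun _ : Ω => ()) ω)) = entOf μ g from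
    entOf_congr _ _ Prod.fst (fun a => (a, ())) (fun _ => rfl) (fun _ => rfl)]
  rw [show entOf μ (fun ω => (f ω, g ω, (fun _ : Ω => ()) ω))
      = entOf μ (fun ω => (f ω, g ω)) from
    entOf_congr _ _ (fun t => (t.1, t.2.1)) (fun p => (p.1, p.2, ()))
      (fun _ => rfl) (fun _ => rfl)]
  rw [entOf_const hμ1]
  ring

lemma mi_nonneg (hμnn : ∀ ω, 0 ≤ μ ω) (hμ1 : ∑ ω, μ ω = 1) :
    0 ≤ miOf μ f g := by
  rw [miOf_eq_cmi_unit hμ1]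
  exact cmi_nonneg hμnn hμ1

lemma miOf_congr_right {g' : Ω → δ} (u : β → δ) (v : δ → β)
    (hu : ∀ ω, u (g ω) = g' ω) (hv : ∀ ω, v (g' ω) = g ω) :
    miOf μ f g = miOf μ f g' := by
  unfold miOf
  rw [entOf_congr (μ := μ) g g' u v hu hv,
    entOf_congr (μ := μ) (fun ω => (f ω, g ω)) (fun ω => (f ω, g' ω))
      (fun p => (p.1, u p.2)) (fun p => (p.1, v p.2))
      (fun ω => by simp [hu ω]) (fun ω => by simp [hv ω])]

lemma cmi_pair (d : Ω → δ) :
    cmiOf μ f (fun ω => (g ω, d ω)) h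
      = cmiOf μ f g h + cmiOf μ f d (fun ω => (g ω, h ω)) := by
  unfold cmiOf
  rw [show entOf μ (fun ω => ((fun ω => (g ω, d ω)) ω, h ω))
      = entOf μ (fun ω => (d ω, (fun ω => (g ω, h ω)) ω)) from
    entOf_congr _ _ (fun t => (t.1.2, (t.1.1, t.2))) (fun t => ((t.2.1, t.1), t.2.2))
      (fun _ => rfl) (fun _ => rfl)]
  rw [show entOf μ (fun ω => (f ω, (fun ω => (g ω, d ω)) ω, h ω))
      = entOf μ (fun ω => (f ω, d ω, (fun ω => (g ω, h ω)) ω)) from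
    entOf_congr _ _ (fun t => (t.1, (t.2.1.2, (t.2.1.1, t.2.2))))
      (fun t => (t.1, ((t.2.2.1, t.2.1), t.2.2.2)))
      (fun _ => rfl) (fun _ => rfl)]
  ring

lemma mi_split :
    miOf μ f (fun ω => (g ω, h ω)) = miOf μ f h + cmiOf μ f g h := by
  unfold miOf cmiOf
  ring


lemma mi_symm : miOf μ f g = miOf μ g f := by
  unfold miOf
  rw [entOf_congr (μ := μ) (fun ω => (f ω, g ω)) (fun ω => (g ω, f ω))
    Prod.swap Prod.swap (fun _ => rfl) (fun _ => rfl)]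
  ring

lemma step_ineq (hμnn : ∀ ω, 0 ≤ μ ω) (hμ1 : ∑ ω, μ ω = 1)
    (A : Ω → α) (B : Ω → β) (C : Ω → γ) (D : Ω → δ)
    (hM : cmiOf μ C A (fun ω => (B ω, D ω)) = 0) :
    cmiOf μ A B C ≤ miOf μ A (fun ω => (B ω, D ω)) := by
  have h1 : cmiOf μ A (fun ω => (B ω, D ω)) C
      = cmiOf μ A B C + cmiOf μ A D (fun ω => (B ω, C ω)) := cmi_pair D
  have h2 : miOf μ A (fun ω => ((fun ω => (B ω, D ω)) ω, C ω))
      = miOf μ A C + cmiOf μ A (fun ω => (B ω, D ω)) C := mi_split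
  have h3 : miOf μ A (fun ω => (C ω, (fun ω => (B ω, D ω)) ω))
      = miOf μ A (fun ω => (B ω, D ω)) + cmiOf μ A C (fun ω => (B ω, D ω)) := mi_split
  have h4 : miOf μ A (fun ω => ((fun ω => (B ω, D ω)) ω, C ω))
      = miOf μ A (fun ω => (C ω, (fun ω => (B ω, D ω)) ω)) :=
    miOf_congr_right (fun p => (p.2, p.1)) (fun p => (p.2, p.1))
      (fun _ => rfl) (fun _ => rfl)
  have h5 : cmiOf μ A C (fun ω => (B ω, D ω)) = 0 := cmi_symm.trans hM
  have h6 : 0 ≤ cmiOf μ A D (fun ω => (B ω, C ω)) := cmi_nonneg hμnn hμ1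
  have h7 : 0 ≤ miOf μ A C := mi_nonneg hμnn hμ1
  linarith

end Aux


lemma ent_snoc {Ω 𝒴 : Type*} [Fintype Ω] [Fintype 𝒴] (μ : Ω → ℝ) {k : ℕ}
    (Yk : Ω → 𝒴) (P : Ω → Fin k → 𝒴) (Q : Ω → Fin (k+1) → 𝒴)
    (hPQ : ∀ ω (j : Fin k), P ω j = Q ω ⟨j.1, Nat.lt_succ_of_lt j.2⟩)
    (hYQ : ∀ ω, Yk ω = Q ω ⟨k, Nat.lt_succ_self k⟩) :
    entOf μ (fun ω => (Yk ω, P ω)) = entOf μ Q := by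
  refine entOf_congr _ _
    (fun p (j : Fin (k+1)) => if h : j.1 < k then p.2 ⟨j.1, h⟩ else p.1)
    (fun q => (q ⟨k, Nat.lt_succ_self k⟩, fun j : Fin k => q ⟨j.1, Nat.lt_succ_of_lt j.2⟩))
    ?_ ?_
  · intro ω
    funext j
    show (if h : j.1 < k then P ω ⟨j.1, h⟩ else Yk ω) = Q ω j
    by_cases h : j.1 < k
    · rw [dif_pos h]
      exact hPQ ω ⟨j.1, h⟩
    · rw [dif_neg h]
      have hj : j = ⟨k, Nat.lt_succ_self k⟩ :=
        Fin.ext (Nat.le_antisymm (Nat.lt_succ_iff.mp j.2) (Nat.le_of_not_lt h))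
      rw [hj]
      exact hYQ ω
  · intro ω
    show (Q ω ⟨k, Nat.lt_succ_self k⟩, fun j : Fin k => Q ω ⟨j.1, Nat.lt_succ_of_lt j.2⟩)
      = (Yk ω, P ω)
    have h2 : P ω = fun j : Fin k => Q ω ⟨j.1, Nat.lt_succ_of_lt j.2⟩ :=
      funext fun j => hPQ ω j
    rw [hYQ ω, h2]

lemma ent_snoc_pair {Ω 𝒴 β : Type*} [Fintype Ω] [Fintype 𝒴] [Fintype β]
    (μ : Ω → ℝ) {k : ℕ} (Yk : Ω → 𝒴) (Bv : Ω → β)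
    (P : Ω → Fin k → 𝒴) (Q : Ω → Fin (k+1) → 𝒴)
    (hPQ : ∀ ω (j : Fin k), P ω j = Q ω ⟨j.1, Nat.lt_succ_of_lt j.2⟩)
    (hYQ : ∀ ω, Yk ω = Q ω ⟨k, Nat.lt_succ_self k⟩) :
    entOf μ (fun ω => (Yk ω, Bv ω, P ω)) = entOf μ (fun ω => (Bv ω, Q ω)) := by
  refine entOf_congr _ _
    (fun p => (p.2.1, fun (j : Fin (k+1)) => if h : j.1 < k then p.2.2 ⟨j.1, h⟩ else p.1))
    (fun q => (q.2 ⟨k, Nat.lt_succ_self k⟩, q.1,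
      fun j : Fin k => q.2 ⟨j.1, Nat.lt_succ_of_lt j.2⟩))
    ?_ ?_
  · intro ω
    refine congrArg (Prod.mk (Bv ω)) ?_
    funext j
    show (if h : j.1 < k then P ω ⟨j.1, h⟩ else Yk ω) = Q ω j
    by_cases h : j.1 < k
    · rw [dif_pos h]
      exact hPQ ω ⟨j.1, h⟩
    · rw [dif_neg h]
      have hj : j = ⟨k, Nat.lt_succ_self k⟩ :=
        Fin.ext (Nat.le_antisymm (Nat.lt_succ_iff.mp j.2) (Nat.le_of_not_lt h))
      rw [hj]
      exact hYQ ω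
  · intro ω
    show (Q ω ⟨k, Nat.lt_succ_self k⟩, Bv ω,
        fun j : Fin k => Q ω ⟨j.1, Nat.lt_succ_of_lt j.2⟩) = (Yk ω, Bv ω, P ω)
    have h2 : P ω = fun j : Fin k => Q ω ⟨j.1, Nat.lt_succ_of_lt j.2⟩ :=
      funext fun j => hPQ ω j
    rw [hYQ ω, h2]

lemma sum_pi_prod {n : ℕ} {𝒴 : Type*} [Fintype 𝒴] (G : Fin n → 𝒴 → ℝ) :
    ∑ ys : Fin n → 𝒴, ∏ j, G j (ys j) = ∏ j, ∑ y, G j y := by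
  rw [Finset.prod_univ_sum, Fintype.piFinset_univ]

lemma indic_prod_sum {n : ℕ} {𝒳 𝒴 : Type*} [Fintype 𝒳] [Fintype 𝒴] (r : 𝒳 → 𝒴 → ℝ)
    (T : Fin n → 𝒴 → Prop) (xs : Fin n → 𝒳) :
    ∑ ys : Fin n → 𝒴, (if ∀ j, T j (ys j) then ∏ j, r (xs j) (ys j) else 0)
      = ∏ j, ∑ y, (if T j y then r (xs j) y else 0) := by
  rw [← sum_pi_prod]
  refine Finset.sum_congr rfl fun ys _ => ?_
  by_cases hT : ∀ j, T j (ys j)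
  · rw [if_pos hT]
    exact Finset.prod_congr rfl fun j _ => (if_pos (hT j)).symm
  · rw [if_neg hT]
    push_neg at hT
    obtain ⟨j0, hj0⟩ := hT
    exact (Finset.prod_eq_zero (Finset.mem_univ j0)
      (show (if T j0 (ys j0) then r (xs j0) (ys j0) else 0) = 0 from if_neg hj0)).symm

lemma pdist_comp {Ω W' κ : Type*} [Fintype Ω] [Fintype W']
    (μ : Ω → ℝ) (Wm : Ω → W') (F : W' → κ) (z : κ) :
    pdist μ (fun ω => F (Wm ω)) z = ∑ w, (if F w = z then pdist μ Wm w else 0) := by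
  unfold pdist
  symm
  calc ∑ w, (if F w = z then ∑ ω, (if Wm ω = w then μ ω else 0) else 0)
      = ∑ w, ∑ ω, (if Wm ω = w then (if F w = z then μ ω else 0) else 0) := by
        refine Finset.sum_congr rfl fun w _ => ?_
        by_cases h1 : F w = z
        · rw [if_pos h1]
          exact Finset.sum_congr rfl fun ω _ => by
            by_cases h2 : Wm ω = w <;> simp [h1, h2]
        · rw [if_neg h1]
          exact (Finset.sum_eq_zero fun ω _ => by
            by_cases h2 : Wm ω = w <;> simp [h1, h2]).symm
    _ = ∑ ω, ∑ w, (if Wm ω = w then (if F w = z then μ ω else 0) else 0) :=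
        Finset.sum_comm
    _ = ∑ ω, (if F (Wm ω) = z then μ ω else 0) := by
        refine Finset.sum_congr rfl fun ω _ => ?_
        simp

lemma pdist_formula {Ω 𝒳 𝒴 κ : Type*} [Fintype Ω] [Fintype 𝒳] [Fintype 𝒴] {n : ℕ}
    (μ : Ω → ℝ) (Wm : Ω → (Fin n → 𝒳) × (Fin n → 𝒴)) (PXY : 𝒳 × 𝒴 → ℝ)
    (hiid : ∀ w : (Fin n → 𝒳) × (Fin n → 𝒴), pdist μ Wm w = ∏ j, PXY (w.1 j, w.2 j))
    (F : (Fin n → 𝒳) × (Fin n → 𝒴) → κ) (z : κ)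
    (S : (Fin n → 𝒳) → Prop) (T : Fin n → 𝒴 → Prop)
    (hFz : ∀ w, F w = z ↔ S w.1 ∧ ∀ j, T j (w.2 j)) :
    pdist μ (fun ω => F (Wm ω)) z
      = ∑ xs, if S xs then ∏ j, ∑ y, (if T j y then PXY (xs j, y) else 0) else 0 := by
  rw [pdist_comp, Fintype.sum_prod_type]
  refine Finset.sum_congr rfl fun xs _ => ?_
  by_cases hS : S xs
  · rw [if_pos hS, ← indic_prod_sum (fun x y => PXY (x, y)) T xs]
    refine Finset.sum_congr rfl fun ys _ => ?_
    by_cases hT : ∀ j, T j (ys j)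
    · rw [if_pos ((hFz (xs, ys)).2 ⟨hS, hT⟩), if_pos hT, hiid (xs, ys)]
    · rw [if_neg (fun h => hT ((hFz (xs, ys)).1 h).2), if_neg hT]
  · rw [if_neg hS]
    exact Finset.sum_eq_zero fun ys _ => if_neg (fun h => hS ((hFz (xs, ys)).1 h).1)


/-- For i.i.d. pairs `(X_k, Y_k)` and a message `M = φ(Xⁿ)`,
`I(Yⁿ; M) ≤ ∑ₖ I(Y_k; U_k)` with `U_k = (M, X^{k-1})`, and the Markov chain
`Y^{k-1} — (M, X^{k-1}) — Y_k` holds (stated as vanishing conditional mutual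
information). -/
theorem stmt_2 {Ω 𝒳 𝒴 M : Type*} [Fintype Ω] [Fintype 𝒳] [Fintype 𝒴] [Fintype M]
    (μ : Ω → ℝ) (hμ : IsPMF μ) (n : ℕ)
    (X : Fin n → Ω → 𝒳) (Y : Fin n → Ω → 𝒴) (PXY : 𝒳 × 𝒴 → ℝ) (hPXY : IsPMF PXY)
    (hiid : ∀ (xs : Fin n → 𝒳) (ys : Fin n → 𝒴),
      pdist μ (fun ω => (fun k => X k ω, fun k => Y k ω)) (xs, ys) = ∏ k, PXY (xs k, ys k))
    (φ : (Fin n → 𝒳) → M) :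
    miOf μ (fun ω (k : Fin n) => Y k ω) (fun ω => φ (fun k => X k ω))
        ≤ ∑ k : Fin n,
            miOf μ (Y k)
              (fun ω => (φ (fun j => X j ω),
                fun j : Fin k.1 => X ⟨j.1, j.2.trans k.2⟩ ω))
      ∧ ∀ k : Fin n,
          cmiOf μ (fun ω (j : Fin k.1) => Y ⟨j.1, j.2.trans k.2⟩ ω) (Y k)
            (fun ω => (φ (fun j => X j ω),
              fun j : Fin k.1 => X ⟨j.1, j.2.trans k.2⟩ ω)) = 0 := by
  obtain ⟨hμnn, hμ1⟩ := hμ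
  have hiid' : ∀ w : (Fin n → 𝒳) × (Fin n → 𝒴),
      pdist μ (fun ω => (fun j => X j ω, fun j => Y j ω)) w = ∏ j, PXY (w.1 j, w.2 j) :=
    fun w => hiid w.1 w.2
  -- THE MARKOV PROPERTY
  have markov : ∀ k : Fin n,
      cmiOf μ (fun ω (j : Fin k.1) => Y ⟨j.1, j.2.trans k.2⟩ ω) (Y k)
        (fun ω => (φ (fun j => X j ω),
          fun j : Fin k.1 => X ⟨j.1, j.2.trans k.2⟩ ω)) = 0 := by
    intro k
    refine cmi_eq_zero hμnn (fun a b c => ?_)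
    obtain ⟨m, x⟩ := c
    have hF3 : ∀ w : (Fin n → 𝒳) × (Fin n → 𝒴),
        ((fun j : Fin k.1 => w.2 ⟨j.1, j.2.trans k.2⟩), w.2 k,
          (φ w.1, fun j : Fin k.1 => w.1 ⟨j.1, j.2.trans k.2⟩)) = (a, b, (m, x))
        ↔ (φ w.1 = m ∧ (fun j : Fin k.1 => w.1 ⟨j.1, j.2.trans k.2⟩) = x)
          ∧ ∀ j : Fin n, ((∀ h : j.1 < k.1, w.2 j = a ⟨j.1, h⟩) ∧ (j = k → w.2 j = b)) := by
      intro w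
      constructor
      · intro hw
        obtain ⟨h1, h2, h3, h4⟩ : (fun j : Fin k.1 => w.2 ⟨j.1, j.2.trans k.2⟩) = a
            ∧ w.2 k = b ∧ φ w.1 = m
            ∧ (fun j : Fin k.1 => w.1 ⟨j.1, j.2.trans k.2⟩) = x := by
          simpa [Prod.ext_iff] using hw
        exact ⟨⟨h3, h4⟩, fun j => ⟨fun hj => congrFun h1 ⟨j.1, hj⟩,
          fun hjk => by rw [hjk]; exact h2⟩⟩
      · rintro ⟨⟨h3, h4⟩, hT⟩
        have h1 : (fun j : Fin k.1 => w.2 ⟨j.1, j.2.trans k.2⟩) = a :=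
          funext fun j' => (hT ⟨j'.1, j'.2.trans k.2⟩).1 j'.2
        have h2 : w.2 k = b := (hT k).2 rfl
        simp [Prod.ext_iff, h1, h2, h3, h4]
    have hFa : ∀ w : (Fin n → 𝒳) × (Fin n → 𝒴),
        ((fun j : Fin k.1 => w.2 ⟨j.1, j.2.trans k.2⟩),
          (φ w.1, fun j : Fin k.1 => w.1 ⟨j.1, j.2.trans k.2⟩)) = (a, (m, x))
        ↔ (φ w.1 = m ∧ (fun j : Fin k.1 => w.1 ⟨j.1, j.2.trans k.2⟩) = x)
          ∧ ∀ j : Fin n, (∀ h : j.1 < k.1, w.2 j = a ⟨j.1, h⟩) := by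
      intro w
      constructor
      · intro hw
        obtain ⟨h1, h3, h4⟩ : (fun j : Fin k.1 => w.2 ⟨j.1, j.2.trans k.2⟩) = a
            ∧ φ w.1 = m ∧ (fun j : Fin k.1 => w.1 ⟨j.1, j.2.trans k.2⟩) = x := by
          simpa [Prod.ext_iff] using hw
        exact ⟨⟨h3, h4⟩, fun j hj => congrFun h1 ⟨j.1, hj⟩⟩
      · rintro ⟨⟨h3, h4⟩, hT⟩
        have h1 : (fun j : Fin k.1 => w.2 ⟨j.1, j.2.trans k.2⟩) = a :=
          funext fun j' => hT ⟨j'.1, j'.2.trans k.2⟩ j'.2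
        simp [Prod.ext_iff, h1, h3, h4]
    have hFb : ∀ w : (Fin n → 𝒳) × (Fin n → 𝒴),
        (w.2 k, (φ w.1, fun j : Fin k.1 => w.1 ⟨j.1, j.2.trans k.2⟩)) = (b, (m, x))
        ↔ (φ w.1 = m ∧ (fun j : Fin k.1 => w.1 ⟨j.1, j.2.trans k.2⟩) = x)
          ∧ ∀ j : Fin n, (j = k → w.2 j = b) := by
      intro w
      constructor
      · intro hw
        obtain ⟨h2, h3, h4⟩ : w.2 k = b ∧ φ w.1 = m
            ∧ (fun j : Fin k.1 => w.1 ⟨j.1, j.2.trans k.2⟩) = x := by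
          simpa [Prod.ext_iff] using hw
        exact ⟨⟨h3, h4⟩, fun j hjk => by rw [hjk]; exact h2⟩
      · rintro ⟨⟨h3, h4⟩, hT⟩
        have h2 : w.2 k = b := hT k rfl
        simp [Prod.ext_iff, h2, h3, h4]
    have hF0 : ∀ w : (Fin n → 𝒳) × (Fin n → 𝒴),
        (φ w.1, fun j : Fin k.1 => w.1 ⟨j.1, j.2.trans k.2⟩) = (m, x)
        ↔ (φ w.1 = m ∧ (fun j : Fin k.1 => w.1 ⟨j.1, j.2.trans k.2⟩) = x)
          ∧ ∀ _j : Fin n, True := by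
      intro w
      simp [Prod.ext_iff]
    have hP3 := pdist_formula μ (fun ω => (fun j => X j ω, fun j => Y j ω)) PXY hiid'
      (fun w => ((fun j : Fin k.1 => w.2 ⟨j.1, j.2.trans k.2⟩), w.2 k,
        (φ w.1, fun j : Fin k.1 => w.1 ⟨j.1, j.2.trans k.2⟩))) (a, b, (m, x))
      (fun xs => φ xs = m ∧ (fun j : Fin k.1 => xs ⟨j.1, j.2.trans k.2⟩) = x)
      (fun j y => (∀ h : j.1 < k.1, y = a ⟨j.1, h⟩) ∧ (j = k → y = b)) hF3
    have hPa := pdist_formula μ (fun ω => (fun j => X j ω, fun j => Y j ω)) PXY hiid'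
      (fun w => ((fun j : Fin k.1 => w.2 ⟨j.1, j.2.trans k.2⟩),
        (φ w.1, fun j : Fin k.1 => w.1 ⟨j.1, j.2.trans k.2⟩))) (a, (m, x))
      (fun xs => φ xs = m ∧ (fun j : Fin k.1 => xs ⟨j.1, j.2.trans k.2⟩) = x)
      (fun j y => ∀ h : j.1 < k.1, y = a ⟨j.1, h⟩) hFa
    have hPb := pdist_formula μ (fun ω => (fun j => X j ω, fun j => Y j ω)) PXY hiid'
      (fun w => (w.2 k, (φ w.1, fun j : Fin k.1 => w.1 ⟨j.1, j.2.trans k.2⟩))) (b, (m, x))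
      (fun xs => φ xs = m ∧ (fun j : Fin k.1 => xs ⟨j.1, j.2.trans k.2⟩) = x)
      (fun j y => j = k → y = b) hFb
    have hP0 := pdist_formula μ (fun ω => (fun j => X j ω, fun j => Y j ω)) PXY hiid'
      (fun w => (φ w.1, fun j : Fin k.1 => w.1 ⟨j.1, j.2.trans k.2⟩)) (m, x)
      (fun xs => φ xs = m ∧ (fun j : Fin k.1 => xs ⟨j.1, j.2.trans k.2⟩) = x)
      (fun _ _ => True) hF0
    show pdist μ (fun ω => ((fun j : Fin k.1 => Y ⟨j.1, j.2.trans k.2⟩ ω), Y k ω,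
        (φ (fun j => X j ω), fun j : Fin k.1 => X ⟨j.1, j.2.trans k.2⟩ ω))) (a, b, (m, x))
      * pdist μ (fun ω => (φ (fun j => X j ω),
          fun j : Fin k.1 => X ⟨j.1, j.2.trans k.2⟩ ω)) (m, x)
      = pdist μ (fun ω => ((fun j : Fin k.1 => Y ⟨j.1, j.2.trans k.2⟩ ω),
          (φ (fun j => X j ω), fun j : Fin k.1 => X ⟨j.1, j.2.trans k.2⟩ ω))) (a, (m, x))
        * pdist μ (fun ω => (Y k ω,
          (φ (fun j => X j ω), fun j : Fin k.1 => X ⟨j.1, j.2.trans k.2⟩ ω))) (b, (m, x))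
    rw [show pdist μ (fun ω => ((fun j : Fin k.1 => Y ⟨j.1, j.2.trans k.2⟩ ω), Y k ω,
        (φ (fun j => X j ω), fun j : Fin k.1 => X ⟨j.1, j.2.trans k.2⟩ ω))) (a, b, (m, x))
        = _ from hP3,
      show pdist μ (fun ω => (φ (fun j => X j ω),
          fun j : Fin k.1 => X ⟨j.1, j.2.trans k.2⟩ ω)) (m, x) = _ from hP0,
      show pdist μ (fun ω => ((fun j : Fin k.1 => Y ⟨j.1, j.2.trans k.2⟩ ω),
          (φ (fun j => X j ω), fun j : Fin k.1 => X ⟨j.1, j.2.trans k.2⟩ ω))) (a, (m, x))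
        = _ from hPa,
      show pdist μ (fun ω => (Y k ω,
          (φ (fun j => X j ω), fun j : Fin k.1 => X ⟨j.1, j.2.trans k.2⟩ ω))) (b, (m, x))
        = _ from hPb]
    -- now a purely combinatorial identity about sums over xs
    have sum_if_eq : ∀ (P : 𝒴 → Prop) (x' : 𝒳) (y0 : 𝒴), (∀ y, P y ↔ y = y0) →
        (∑ y, if P y then PXY (x', y) else 0) = PXY (x', y0) := by
      intro P x' y0 hP
      rw [Finset.sum_congr rfl fun y _ => if_congr (hP y) rfl rfl]
      simp
    have sum_if_true : ∀ (P : 𝒴 → Prop) (x' : 𝒳), (∀ y, P y) →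
        (∑ y, if P y then PXY (x', y) else 0) = ∑ y, PXY (x', y) :=
      fun P x' hP => Finset.sum_congr rfl fun y _ => if_pos (hP y)
    have hcross : ∀ (j : Fin n) (x1 x2 : 𝒳), (j.1 < k.1 → x1 = x2) →
        (∑ y, @ite ℝ ((∀ h : j.1 < k.1, y = a ⟨j.1, h⟩) ∧ (j = k → y = b)) (Classical.propDecidable _) (PXY (x1, y)) 0)
          * (∑ y, @ite ℝ (True) (Classical.propDecidable _) (PXY (x2, y)) 0)
        = (∑ y, @ite ℝ (j = k → y = b) (Classical.propDecidable _) (PXY (x1, y)) 0)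
          * (∑ y, @ite ℝ (∀ h : j.1 < k.1, y = a ⟨j.1, h⟩) (Classical.propDecidable _) (PXY (x2, y)) 0) := by
      intro j x1 x2 hx
      by_cases hj : j.1 < k.1
      · have hjk : j ≠ k := by
          intro h
          rw [h] at hj
          omega
        have e1 : (∑ y, @ite ℝ ((∀ h : j.1 < k.1, y = a ⟨j.1, h⟩) ∧ (j = k → y = b)) (Classical.propDecidable _) (PXY (x1, y)) 0) = PXY (x1, a ⟨j.1, hj⟩) :=
          sum_if_eq (fun y => (∀ h : j.1 < k.1, y = a ⟨j.1, h⟩) ∧ (j = k → y = b))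
            x1 (a ⟨j.1, hj⟩)
            (fun y => ⟨fun hy => hy.1 hj, fun hy => ⟨fun _ => hy, fun hk' => absurd hk' hjk⟩⟩)
        have e2 : (∑ y, @ite ℝ (True) (Classical.propDecidable _) (PXY (x2, y)) 0) = ∑ y, PXY (x2, y) :=
          sum_if_true (fun _ => True) x2 (fun _ => trivial)
        have e3 : (∑ y, @ite ℝ (j = k → y = b) (Classical.propDecidable _) (PXY (x1, y)) 0) = ∑ y, PXY (x1, y) :=
          sum_if_true (fun y => j = k → y = b) x1 (fun y (hk' : j = k) => absurd hk' hjk)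
        have e4 : (∑ y, @ite ℝ (∀ h : j.1 < k.1, y = a ⟨j.1, h⟩) (Classical.propDecidable _) (PXY (x2, y)) 0)
            = PXY (x2, a ⟨j.1, hj⟩) :=
          sum_if_eq (fun y => ∀ h : j.1 < k.1, y = a ⟨j.1, h⟩) x2 (a ⟨j.1, hj⟩)
            (fun y => ⟨fun hy => hy hj, fun hy _ => hy⟩)
        rw [e1, e2, e3, e4, hx hj]
        ring
      · by_cases hjk : j = k
        · have e1 : (∑ y, @ite ℝ ((∀ h : j.1 < k.1, y = a ⟨j.1, h⟩) ∧ (j = k → y = b)) (Classical.propDecidable _) (PXY (x1, y)) 0) = PXY (x1, b) :=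
            sum_if_eq (fun y => (∀ h : j.1 < k.1, y = a ⟨j.1, h⟩) ∧ (j = k → y = b)) x1 b
              (fun y => ⟨fun hy => hy.2 hjk, fun hy => ⟨fun h' => absurd h' hj, fun _ => hy⟩⟩)
          have e2 : (∑ y, @ite ℝ (True) (Classical.propDecidable _) (PXY (x2, y)) 0) = ∑ y, PXY (x2, y) :=
            sum_if_true (fun _ => True) x2 (fun _ => trivial)
          have e3 : (∑ y, @ite ℝ (j = k → y = b) (Classical.propDecidable _) (PXY (x1, y)) 0) = PXY (x1, b) :=
            sum_if_eq (fun y => j = k → y = b) x1 b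
              (fun y => ⟨fun hy => hy hjk, fun hy _ => hy⟩)
          have e4 : (∑ y, @ite ℝ (∀ h : j.1 < k.1, y = a ⟨j.1, h⟩) (Classical.propDecidable _) (PXY (x2, y)) 0)
              = ∑ y, PXY (x2, y) :=
            sum_if_true (fun y => ∀ h : j.1 < k.1, y = a ⟨j.1, h⟩) x2 (fun y (h' : j.1 < k.1) => absurd h' hj)
          rw [e1, e2, e3, e4]
        · have e1 : (∑ y, @ite ℝ ((∀ h : j.1 < k.1, y = a ⟨j.1, h⟩) ∧ (j = k → y = b)) (Classical.propDecidable _) (PXY (x1, y)) 0) = ∑ y, PXY (x1, y) :=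
            sum_if_true (fun y => (∀ h : j.1 < k.1, y = a ⟨j.1, h⟩) ∧ (j = k → y = b)) x1
              (fun y => ⟨fun h' => absurd h' hj, fun hk' => absurd hk' hjk⟩)
          have e2 : (∑ y, @ite ℝ (True) (Classical.propDecidable _) (PXY (x2, y)) 0) = ∑ y, PXY (x2, y) :=
            sum_if_true (fun _ => True) x2 (fun _ => trivial)
          have e3 : (∑ y, @ite ℝ (j = k → y = b) (Classical.propDecidable _) (PXY (x1, y)) 0) = ∑ y, PXY (x1, y) :=
            sum_if_true (fun y => j = k → y = b) x1 (fun y (hk' : j = k) => absurd hk' hjk)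
          have e4 : (∑ y, @ite ℝ (∀ h : j.1 < k.1, y = a ⟨j.1, h⟩) (Classical.propDecidable _) (PXY (x2, y)) 0)
              = ∑ y, PXY (x2, y) :=
            sum_if_true (fun y => ∀ h : j.1 < k.1, y = a ⟨j.1, h⟩) x2 (fun y (h' : j.1 < k.1) => absurd h' hj)
          rw [e1, e2, e3, e4]
    rw [Finset.sum_mul_sum, Finset.sum_mul_sum]
    rw [Finset.sum_comm (γ := Fin n → 𝒳) (α := Fin n → 𝒳)]
    refine Finset.sum_congr rfl fun xs _ => Finset.sum_congr rfl fun xs' _ => ?_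
    by_cases hS1 : φ xs = m ∧ (fun j : Fin k.1 => xs ⟨j.1, j.2.trans k.2⟩) = x
    · by_cases hS2 : φ xs' = m ∧ (fun j : Fin k.1 => xs' ⟨j.1, j.2.trans k.2⟩) = x
      · rw [if_pos hS1, if_pos hS2]
        rw [if_pos hS1, if_pos hS2]
        rw [← Finset.prod_mul_distrib, ← Finset.prod_mul_distrib]
        refine Finset.prod_congr rfl fun j _ => ?_
        exact (hcross j (xs' j) (xs j)
          (fun hj => (congrFun hS2.2 ⟨j.1, hj⟩).trans
            (congrFun hS1.2 ⟨j.1, hj⟩).symm)).trans (mul_comm _ _)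
      · rw [if_neg hS2, if_neg hS2]
        simp
    · rw [if_neg hS1, if_neg hS1]
      simp
  refine ⟨?_, markov⟩
  -- PART 1: the inequality via chain rule
  let a : ℕ → ℝ := fun i =>
    if h : i ≤ n then entOf μ (fun ω (j : Fin i) => Y ⟨j.1, lt_of_lt_of_le j.2 h⟩ ω) else 0
  let bb : ℕ → ℝ := fun i =>
    if h : i ≤ n then entOf μ (fun ω => (φ (fun j => X j ω),
      fun (j : Fin i) => Y ⟨j.1, lt_of_lt_of_le j.2 h⟩ ω)) else 0
  have ha : ∀ (i : ℕ) (h : i ≤ n),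
      a i = entOf μ (fun ω (j : Fin i) => Y ⟨j.1, lt_of_lt_of_le j.2 h⟩ ω) :=
    fun i h => dif_pos h
  have hbb : ∀ (i : ℕ) (h : i ≤ n),
      bb i = entOf μ (fun ω => (φ (fun j => X j ω),
        fun (j : Fin i) => Y ⟨j.1, lt_of_lt_of_le j.2 h⟩ ω)) :=
    fun i h => dif_pos h
  have key : ∀ k : Fin n,
      cmiOf μ (Y k) (fun ω => φ (fun j => X j ω))
        (fun ω (j : Fin k.1) => Y ⟨j.1, j.2.trans k.2⟩ ω)
      = (a (k.1+1) - a k.1) - (bb (k.1+1) - bb k.1) := by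
    intro k
    have hk1 : k.1 ≤ n := le_of_lt k.2
    have hk2 : k.1 + 1 ≤ n := k.2
    have e1 : entOf μ (fun ω => (Y k ω, (fun ω (j : Fin k.1) => Y ⟨j.1, j.2.trans k.2⟩ ω) ω))
        = a (k.1 + 1) := by
      rw [ha (k.1+1) hk2]
      exact ent_snoc μ (Y k) _ _ (fun ω j => rfl) (fun ω => rfl)
    have e2 : entOf μ (fun ω => ((fun ω => φ (fun j => X j ω)) ω,
        (fun ω (j : Fin k.1) => Y ⟨j.1, j.2.trans k.2⟩ ω) ω)) = bb k.1 :=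
      (hbb k.1 hk1).symm
    have e3 : entOf μ (fun ω => (Y k ω, (fun ω => φ (fun j => X j ω)) ω,
        (fun ω (j : Fin k.1) => Y ⟨j.1, j.2.trans k.2⟩ ω) ω)) = bb (k.1 + 1) := by
      rw [hbb (k.1+1) hk2]
      exact ent_snoc_pair μ (Y k) _ _ _ (fun ω j => rfl) (fun ω => rfl)
    have e4 : entOf μ (fun ω (j : Fin k.1) => Y ⟨j.1, j.2.trans k.2⟩ ω) = a k.1 :=
      (ha k.1 hk1).symm
    unfold cmiOf
    rw [e1, e2, e3, e4]
    ring
  have hYn : entOf μ (fun ω (j : Fin n) => Y j ω) = a n := (ha n le_rfl).symm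
  have hB0 : entOf μ (fun ω => φ (fun j => X j ω)) = bb 0 := by
    rw [hbb 0 (Nat.zero_le n)]
    exact entOf_congr _ _
      (fun m' => (m', fun j : Fin 0 => j.elim0))
      Prod.fst
      (fun ω => congrArg (Prod.mk (φ (fun j => X j ω))) (funext fun j => j.elim0))
      (fun ω => rfl)
  have hYnB : entOf μ (fun ω => ((fun ω (j : Fin n) => Y j ω) ω,
      (fun ω => φ (fun j => X j ω)) ω)) = bb n := by
    rw [hbb n le_rfl]
    exact entOf_congr _ _ Prod.swap Prod.swap (fun _ => rfl) (fun _ => rfl)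
  have ha0 : a 0 = 0 := by
    rw [ha 0 (Nat.zero_le n)]
    rw [show (fun ω (j : Fin 0) => Y ⟨j.1, lt_of_lt_of_le j.2 (Nat.zero_le n)⟩ ω)
        = (fun _ : Ω => fun j : Fin 0 => j.elim0) from
      funext fun ω => funext fun j => j.elim0]
    exact entOf_const hμ1 _
  have tele : ∑ k : Fin n, ((a (k.1+1) - a k.1) - (bb (k.1+1) - bb k.1))
      = (a n - a 0) - (bb n - bb 0) := by
    rw [Fin.sum_univ_eq_sum_range (fun i => (a (i+1) - a i) - (bb (i+1) - bb i)) n]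
    rw [Finset.sum_sub_distrib, Finset.sum_range_sub a, Finset.sum_range_sub bb]
  calc miOf μ (fun ω (k : Fin n) => Y k ω) (fun ω => φ (fun k => X k ω))
      = ∑ k : Fin n, cmiOf μ (Y k) (fun ω => φ (fun j => X j ω))
          (fun ω (j : Fin k.1) => Y ⟨j.1, j.2.trans k.2⟩ ω) := by
        unfold miOf
        rw [hYn, hB0, hYnB]
        rw [Finset.sum_congr rfl fun k _ => key k]
        rw [tele, ha0]
        ring
    _ ≤ ∑ k : Fin n, miOf μ (Y k) (fun ω => (φ (fun j => X j ω),
          fun j : Fin k.1 => X ⟨j.1, j.2.trans k.2⟩ ω)) := by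
        refine Finset.sum_le_sum fun k _ => ?_
        exact step_ineq hμnn hμ1 (Y k) (fun ω => φ (fun j => X j ω))
          (fun ω (j : Fin k.1) => Y ⟨j.1, j.2.trans k.2⟩ ω)
          (fun ω (j : Fin k.1) => X ⟨j.1, j.2.trans k.2⟩ ω)
          (markov k)
end
end

section
/- (Optimal exponents with full rates.) If R₁ ≥ H(X) and R₂ ≥ H(Y₁|X), then the optimal error-exponent region is exactly {(θ₁,θ₂) : 0 ≤ θ₁ ≤ D(P_{XY₁} || P̄_{XY₁}), 0 ≤ θ₂ ≤ D(P_{XY₁Y₂} || P̄_{XY₁Y₂})}. In particular the converse part: any achievable θ₁ satisfies θ₁ ≤ D(P_{XY₁}||P̄_{XY₁}) even when Detector 1 observes (X^n, Y₁^n) directly (Stein's lemma bound), and similarly θ₂ ≤ D(P_{XY₁Y₂}||P̄_{XY₁Y₂}). -/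
open Finset Real Filter
open scoped Classical BigOperators

noncomputable section

/-- A coding/testing scheme at blocklength `n`: the sensor message `φ₁`, the
cooperation message `φ₂`, and the two binary decisions (`true` = declare the
alternative hypothesis `H̄`, `false` = declare the null hypothesis `H`). -/
structure Scheme (𝒳 𝒴₁ 𝒴₂ : Type*) (n : ℕ) where
  m₁ : ℕ
  m₂ : ℕ
  φ₁ : (Fin n → 𝒳) → Fin m₁
  φ₂ : Fin m₁ × (Fin n → 𝒴₁) → Fin m₂
  ψ₁ : Fin m₁ × (Fin n → 𝒴₁) → Bool
  ψ₂ : Fin m₁ × Fin m₂ × (Fin n → 𝒴₂) → Bool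

variable {𝒳 𝒴₁ 𝒴₂ : Type*} [Fintype 𝒳] [Fintype 𝒴₁] [Fintype 𝒴₂]

/-- Probability of an event under the `n`-fold i.i.d. extension of the pmf `p`. -/
def prn (p : 𝒳 × 𝒴₁ × 𝒴₂ → ℝ) (n : ℕ)
    (E : (Fin n → 𝒳) → (Fin n → 𝒴₁) → (Fin n → 𝒴₂) → Prop) : ℝ :=
  ∑ x : Fin n → 𝒳, ∑ y1 : Fin n → 𝒴₁, ∑ y2 : Fin n → 𝒴₂,
    if E x y1 y2 then ∏ t, p (x t, y1 t, y2 t) else 0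

/-- Decision of Detector 1. -/
def dec1 {n : ℕ} (S : Scheme 𝒳 𝒴₁ 𝒴₂ n) (x : Fin n → 𝒳) (y1 : Fin n → 𝒴₁) : Bool :=
  S.ψ₁ (S.φ₁ x, y1)

/-- Decision of Detector 2. -/
def dec2 {n : ℕ} (S : Scheme 𝒳 𝒴₁ 𝒴₂ n) (x : Fin n → 𝒳) (y1 : Fin n → 𝒴₁)
    (y2 : Fin n → 𝒴₂) : Bool :=
  S.ψ₂ (S.φ₁ x, S.φ₂ (S.φ₁ x, y1), y2)

/-- Type-I error probability of Detector 1 (declaring `H̄` under `H ∼ P`). -/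
def α1 (P : 𝒳 × 𝒴₁ × 𝒴₂ → ℝ) {n : ℕ} (S : Scheme 𝒳 𝒴₁ 𝒴₂ n) : ℝ :=
  prn P n (fun x y1 _ => dec1 S x y1 = true)

/-- Type-II error probability of Detector 1 (declaring `H` under `H̄ ∼ P̄`). -/
def β1 (Pb : 𝒳 × 𝒴₁ × 𝒴₂ → ℝ) {n : ℕ} (S : Scheme 𝒳 𝒴₁ 𝒴₂ n) : ℝ :=
  prn Pb n (fun x y1 _ => dec1 S x y1 = false)

/-- Type-I error probability of Detector 2. -/
def α2 (P : 𝒳 × 𝒴₁ × 𝒴₂ → ℝ) {n : ℕ} (S : Scheme 𝒳 𝒴₁ 𝒴₂ n) : ℝ :=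
  prn P n (fun x y1 y2 => dec2 S x y1 y2 = true)

/-- Type-II error probability of Detector 2. -/
def β2 (Pb : 𝒳 × 𝒴₁ × 𝒴₂ → ℝ) {n : ℕ} (S : Scheme 𝒳 𝒴₁ 𝒴₂ n) : ℝ :=
  prn Pb n (fun x y1 y2 => dec2 S x y1 y2 = false)

/-- Achievability of an error-exponent pair `(θ₁, θ₂)` at rates `(R₁, R₂)` and
type-I error constraints `(ε₁, ε₂)`, for null hypothesis `P` and alternative
hypothesis `P̄`. -/
def Achievable (P Pb : 𝒳 × 𝒴₁ × 𝒴₂ → ℝ) (R₁ R₂ ε₁ ε₂ θ₁ θ₂ : ℝ) : Prop :=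
  ∃ S : ∀ n : ℕ, Scheme 𝒳 𝒴₁ 𝒴₂ n,
    Filter.limsup (fun n : ℕ => α1 P (S n)) Filter.atTop ≤ ε₁ ∧
    Filter.limsup (fun n : ℕ => α2 P (S n)) Filter.atTop ≤ ε₂ ∧
    θ₁ ≤ Filter.liminf (fun n : ℕ => -(1 / (n : ℝ)) * Real.log (β1 Pb (S n))) Filter.atTop ∧
    θ₂ ≤ Filter.liminf (fun n : ℕ => -(1 / (n : ℝ)) * Real.log (β2 Pb (S n))) Filter.atTop ∧
    Filter.limsup (fun n : ℕ => (1 / (n : ℝ)) * Real.log ((S n).m₁)) Filter.atTop ≤ R₁ ∧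
    Filter.limsup (fun n : ℕ => (1 / (n : ℝ)) * Real.log ((S n).m₂)) Filter.atTop ≤ R₂

/-- Entropy of a pmf (nats). -/
def pmfEnt {α : Type*} [Fintype α] (p : α → ℝ) : ℝ :=
  -∑ a, p a * Real.log (p a)

set_option linter.unusedSectionVars false
set_option linter.unusedVariables false
set_option maxHeartbeats 1000000

namespace HTAux

section Generic
variable {γ : Type*} [Fintype γ]

def Pw (p : γ → ℝ) {n : ℕ} (z : Fin n → γ) : ℝ := ∏ t, p (z t)

def PrE (p : γ → ℝ) (n : ℕ) (E : (Fin n → γ) → Prop) : ℝ :=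
  ∑ z : Fin n → γ, if E z then Pw p z else 0

lemma sum_prod_pi {n : ℕ} (f : Fin n → γ → ℝ) :
    ∑ z : Fin n → γ, ∏ t, f t (z t) = ∏ t, ∑ a, f t a := by
  rw [Finset.prod_univ_sum (fun _ => (univ : Finset γ)) f, Fintype.piFinset_univ]

lemma Pw_nonneg {p : γ → ℝ} (hp : ∀ a, 0 ≤ p a) {n : ℕ} (z : Fin n → γ) : 0 ≤ Pw p z :=
  Finset.prod_nonneg (fun t _ => hp (z t))

lemma sum_Pw {p : γ → ℝ} (hp1 : ∑ a, p a = 1) (n : ℕ) :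
    ∑ z : Fin n → γ, Pw p z = 1 := by
  unfold Pw; rw [sum_prod_pi (fun _ a => p a)]; simp [hp1]

lemma expect_coord {p : γ → ℝ} (hp1 : ∑ a, p a = 1) {n : ℕ} (h : γ → ℝ) (t : Fin n) :
    ∑ z : Fin n → γ, Pw p z * h (z t) = ∑ a, p a * h a := by
  have key : ∀ z : Fin n → γ, Pw p z * h (z t)
      = ∏ j, (if j = t then p (z j) * h (z j) else p (z j)) := by
    intro z
    rw [← Finset.mul_prod_erase univ _ (mem_univ t), if_pos rfl]
    unfold Pw
    rw [← Finset.mul_prod_erase univ (fun j => p (z j)) (mem_univ t)]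
    rw [Finset.prod_congr rfl (fun j hj => if_neg (Finset.ne_of_mem_erase hj))]
    ring
  rw [Finset.sum_congr rfl (fun z _ => key z)]
  have h1 : ∑ z : Fin n → γ, ∏ j, (if j = t then p (z j) * h (z j) else p (z j))
      = ∏ j, ∑ a, (if j = t then p a * h a else p a) :=
    sum_prod_pi (fun j a => if j = t then p a * h a else p a)
  rw [h1]
  have h2 : ∀ j : Fin n, (∑ a, if j = t then p a * h a else p a)
      = if j = t then ∑ a, p a * h a else 1 := by
    intro j; split_ifs <;> simp [hp1]
  rw [Finset.prod_congr rfl (fun j _ => h2 j)]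
  rw [← Finset.mul_prod_erase univ _ (mem_univ t), if_pos rfl]
  rw [Finset.prod_congr rfl (fun j hj => if_neg (Finset.ne_of_mem_erase hj))]
  simp

lemma expect_pair {p : γ → ℝ} (hp1 : ∑ a, p a = 1) {n : ℕ} (h k : γ → ℝ) {t s : Fin n}
    (hts : t ≠ s) :
    ∑ z : Fin n → γ, Pw p z * (h (z t) * k (z s)) = (∑ a, p a * h a) * (∑ a, p a * k a) := by
  have hs : s ∈ univ.erase t := Finset.mem_erase.2 ⟨(Ne.symm hts), mem_univ s⟩
  have key : ∀ z : Fin n → γ, Pw p z * (h (z t) * k (z s))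
      = ∏ j, (if j = t then p (z j) * h (z j) else if j = s then p (z j) * k (z j) else p (z j)) := by
    intro z
    rw [← Finset.mul_prod_erase univ _ (mem_univ t), if_pos rfl,
      ← Finset.mul_prod_erase _ _ hs, if_neg (Ne.symm hts), if_pos rfl]
    unfold Pw
    rw [← Finset.mul_prod_erase univ (fun j => p (z j)) (mem_univ t),
      ← Finset.mul_prod_erase _ (fun j => p (z j)) hs]
    rw [Finset.prod_congr rfl (fun j hj => ?_)]
    · ring
    · rw [if_neg (Finset.ne_of_mem_erase (Finset.mem_of_mem_erase hj)),
        if_neg (Finset.ne_of_mem_erase hj)]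
  rw [Finset.sum_congr rfl (fun z _ => key z)]
  have h1 : ∑ z : Fin n → γ, ∏ j, (if j = t then p (z j) * h (z j) else if j = s then p (z j) * k (z j) else p (z j))
      = ∏ j, ∑ a, (if j = t then p a * h a else if j = s then p a * k a else p a) :=
    sum_prod_pi (fun j a => if j = t then p a * h a else if j = s then p a * k a else p a)
  rw [h1]
  have h2 : ∀ j : Fin n, (∑ a, if j = t then p a * h a else if j = s then p a * k a else p a)
      = if j = t then ∑ a, p a * h a else if j = s then ∑ a, p a * k a else 1 := by
    intro j; split_ifs <;> simp [hp1]
  rw [Finset.prod_congr rfl (fun j _ => h2 j)]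
  rw [← Finset.mul_prod_erase univ _ (mem_univ t), if_pos rfl,
    ← Finset.mul_prod_erase _ _ hs, if_neg (Ne.symm hts), if_pos rfl]
  rw [Finset.prod_congr rfl (fun j hj => ?_), Finset.prod_const_one, mul_one]
  rw [if_neg (Finset.ne_of_mem_erase (Finset.mem_of_mem_erase hj)),
    if_neg (Finset.ne_of_mem_erase hj)]


lemma var_sum {p : γ → ℝ} (hp1 : ∑ a, p a = 1) {n : ℕ} (g : γ → ℝ)
    (hmean : ∑ a, p a * g a = 0) :
    ∑ z : Fin n → γ, Pw p z * (∑ t, g (z t))^2 = n * (∑ a, p a * (g a)^2) := by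
  have expand : ∀ z : Fin n → γ, Pw p z * (∑ t, g (z t))^2
      = ∑ t, ∑ s, Pw p z * (g (z t) * g (z s)) := by
    intro z
    rw [sq, Finset.sum_mul_sum]
    rw [Finset.mul_sum]
    refine Finset.sum_congr rfl (fun t _ => ?_)
    rw [Finset.mul_sum]
  rw [Finset.sum_congr rfl (fun z _ => expand z), Finset.sum_comm]
  have inner : ∀ t : Fin n, ∑ z : Fin n → γ, ∑ s, Pw p z * (g (z t) * g (z s))
      = ∑ a, p a * (g a)^2 := by
    intro t
    rw [Finset.sum_comm]
    have : ∀ s : Fin n, ∑ z : Fin n → γ, Pw p z * (g (z t) * g (z s))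
        = if t = s then ∑ a, p a * (g a)^2 else 0 := by
      intro s
      by_cases hts : t = s
      · subst hts
        rw [if_pos rfl]
        refine (expect_coord hp1 (fun a => g a * g a) t).trans ?_
        exact Finset.sum_congr rfl (fun a _ => by rw [sq])
      · rw [if_neg hts, expect_pair hp1 g g hts, hmean, mul_zero]
    rw [Finset.sum_congr rfl (fun s _ => this s), Finset.sum_ite_eq univ t]
    simp
  rw [Finset.sum_congr rfl (fun t _ => inner t)]
  simp [Finset.sum_const, Finset.card_fin, nsmul_eq_mul]

lemma cheb {p : γ → ℝ} (hp : ∀ a, 0 ≤ p a) (hp1 : ∑ a, p a = 1) {n : ℕ} (g : γ → ℝ)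
    {c : ℝ} (hc : 0 < c) :
    PrE p n (fun z => c ≤ |∑ t, g (z t) - n * (∑ a, p a * g a)|)
      ≤ n * (∑ a, p a * (g a - ∑ b, p b * g b)^2) / c^2 := by
  set μ := ∑ a, p a * g a with hμ
  have hsum : ∀ z : Fin n → γ, ∑ t, (g (z t) - μ) = ∑ t, g (z t) - n * μ := by
    intro z
    rw [Finset.sum_sub_distrib, Finset.sum_const, Finset.card_fin, nsmul_eq_mul]
  have hmean0 : ∑ a, p a * (g a - μ) = 0 := by
    have h1 : ∑ a, p a * (g a - μ) = ∑ a, (p a * g a - p a * μ) :=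
      Finset.sum_congr rfl (fun a _ => by ring)
    rw [h1, Finset.sum_sub_distrib, ← Finset.sum_mul, hp1, one_mul, ← hμ, sub_self]
  have key := var_sum hp1 (fun a => g a - μ) hmean0 (n := n)
  have hterm : ∀ z : Fin n → γ,
      (if c ≤ |∑ t, g (z t) - n * μ| then Pw p z else 0)
        ≤ Pw p z * (∑ t, g (z t) - n * μ)^2 / c^2 := by
    intro z
    split_ifs with h
    · have h1 : c^2 ≤ (∑ t, g (z t) - n * μ)^2 := by
        rw [← sq_abs (∑ t, g (z t) - n * μ)]
        exact pow_le_pow_left₀ hc.le h 2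
      have h2 : (1:ℝ) ≤ (∑ t, g (z t) - n * μ)^2 / c^2 := by
        rw [le_div_iff₀ (by positivity)]
        linarith
      calc Pw p z = Pw p z * 1 := by ring
        _ ≤ Pw p z * ((∑ t, g (z t) - n * μ)^2 / c^2) :=
            mul_le_mul_of_nonneg_left h2 (Pw_nonneg hp z)
        _ = Pw p z * (∑ t, g (z t) - n * μ)^2 / c^2 := by ring
    · exact div_nonneg (mul_nonneg (Pw_nonneg hp z) (sq_nonneg _)) (sq_nonneg c)
  calc PrE p n (fun z => c ≤ |∑ t, g (z t) - n * μ|)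
      ≤ ∑ z : Fin n → γ, Pw p z * (∑ t, g (z t) - n * μ)^2 / c^2 :=
        Finset.sum_le_sum (fun z _ => hterm z)
    _ = (∑ z : Fin n → γ, Pw p z * (∑ t, (g (z t) - μ))^2) / c^2 := by
        rw [← Finset.sum_div]
        refine congrArg (· / c^2) (Finset.sum_congr rfl (fun z _ => ?_))
        rw [hsum z]
    _ = n * (∑ a, p a * (g a - μ)^2) / c^2 := by rw [key]

lemma PrE_nonneg {p : γ → ℝ} (hp : ∀ a, 0 ≤ p a) (n : ℕ) (E : (Fin n → γ) → Prop) :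
    0 ≤ PrE p n E :=
  Finset.sum_nonneg (fun z _ => by split_ifs; exacts [Pw_nonneg hp z, le_refl 0])

lemma PrE_le_one {p : γ → ℝ} (hp : ∀ a, 0 ≤ p a) (hp1 : ∑ a, p a = 1) (n : ℕ)
    (E : (Fin n → γ) → Prop) : PrE p n E ≤ 1 := by
  rw [← sum_Pw hp1 n]
  exact Finset.sum_le_sum (fun z _ => by split_ifs; exacts [le_refl _, Pw_nonneg hp z])

lemma PrE_mono {p : γ → ℝ} (hp : ∀ a, 0 ≤ p a) {n : ℕ} {E F : (Fin n → γ) → Prop}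
    (hEF : ∀ z, E z → F z) : PrE p n E ≤ PrE p n F := by
  refine Finset.sum_le_sum (fun z _ => ?_)
  split_ifs with h1 h2
  · exact le_refl _
  · exact absurd (hEF z h1) h2
  · exact Pw_nonneg hp z
  · exact le_refl _

lemma PrE_subadd {p : γ → ℝ} (hp : ∀ a, 0 ≤ p a) {n : ℕ} {E F G : (Fin n → γ) → Prop}
    (hEFG : ∀ z, E z → F z ∨ G z) : PrE p n E ≤ PrE p n F + PrE p n G := by
  unfold PrE
  rw [← Finset.sum_add_distrib]
  refine Finset.sum_le_sum (fun z _ => ?_)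
  have hPw := Pw_nonneg hp z
  split_ifs with h1 h2 h3 <;>
    first
      | linarith
      | (exfalso; rcases hEFG z h1 with h | h <;> tauto)

lemma PrE_compl {p : γ → ℝ} (hp1 : ∑ a, p a = 1) {n : ℕ} (E : (Fin n → γ) → Prop) :
    PrE p n E + PrE p n (fun z => ¬ E z) = 1 := by
  unfold PrE
  rw [← Finset.sum_add_distrib, ← sum_Pw hp1 n]
  refine Finset.sum_congr rfl (fun z _ => ?_)
  split_ifs <;> simp_all

lemma PrE_null {p : γ → ℝ} (hp : ∀ a, 0 ≤ p a) (n : ℕ) :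
    PrE p n (fun z => ¬ ∀ t, 0 < p (z t)) = 0 := by
  refine Finset.sum_eq_zero (fun z _ => ?_)
  split_ifs with h
  · push_neg at h
    obtain ⟨t, ht⟩ := h
    exact Finset.prod_eq_zero (mem_univ t) (le_antisymm ht (hp (z t)))
  · rfl

lemma Pw_ratio {p pb : γ → ℝ} (hpb : ∀ a, 0 < pb a) {n : ℕ} {z : Fin n → γ}
    (hz : ∀ t, 0 < p (z t)) :
    Pw pb z = Pw p z * Real.exp (-(∑ t, Real.log (p (z t) / pb (z t)))) := by
  unfold Pw
  rw [(Finset.sum_neg_distrib _).symm, Real.exp_sum, ← Finset.prod_mul_distrib]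
  refine Finset.prod_congr rfl (fun t _ => ?_)
  have h1 := hz t
  have h2 := hpb (z t)
  rw [← Real.log_inv, Real.exp_log (by positivity), inv_div, mul_comm, div_mul_cancel₀ _ h1.ne']

lemma PrE_change_upper {p pb : γ → ℝ} (hp : ∀ a, 0 ≤ p a) (hp1 : ∑ a, p a = 1)
    (hpb : ∀ a, 0 < pb a) {n : ℕ} {c : ℝ} {E : (Fin n → γ) → Prop}
    (hE : ∀ z, E z → (∀ t, 0 < p (z t)) ∧ c ≤ ∑ t, Real.log (p (z t) / pb (z t))) :
    PrE pb n E ≤ Real.exp (-c) := by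
  have hterm : ∀ z : Fin n → γ, (if E z then Pw pb z else 0)
      ≤ Real.exp (-c) * (if E z then Pw p z else 0) := by
    intro z
    split_ifs with h
    · obtain ⟨hpos, hsum⟩ := hE z h
      rw [Pw_ratio hpb hpos, mul_comm]
      refine mul_le_mul_of_nonneg_right ?_ (Pw_nonneg hp z)
      exact Real.exp_le_exp.2 (by linarith)
    · simp
  calc PrE pb n E ≤ ∑ z : Fin n → γ, Real.exp (-c) * (if E z then Pw p z else 0) :=
        Finset.sum_le_sum (fun z _ => hterm z)
    _ = Real.exp (-c) * PrE p n E := by unfold PrE; rw [Finset.mul_sum]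
    _ ≤ Real.exp (-c) * 1 :=
        mul_le_mul_of_nonneg_left (PrE_le_one hp hp1 n E) (Real.exp_nonneg _)
    _ = Real.exp (-c) := mul_one _

lemma PrE_change_lower {p pb : γ → ℝ} (hp : ∀ a, 0 ≤ p a)
    (hpb : ∀ a, 0 < pb a) {n : ℕ} {c : ℝ} {E : (Fin n → γ) → Prop}
    (hE : ∀ z, E z → (∀ t, 0 < p (z t)) ∧ ∑ t, Real.log (p (z t) / pb (z t)) ≤ c) :
    Real.exp (-c) * PrE p n E ≤ PrE pb n E := by
  unfold PrE
  rw [Finset.mul_sum]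
  refine Finset.sum_le_sum (fun z _ => ?_)
  split_ifs with h
  · obtain ⟨hpos, hsum⟩ := hE z h
    rw [Pw_ratio hpb hpos, mul_comm (Pw p z)]
    exact mul_le_mul_of_nonneg_right (Real.exp_le_exp.2 (by linarith)) (Pw_nonneg hp z)
  · simp


lemma klD_nonneg {γ : Type*} [Fintype γ] {p q : γ → ℝ}
    (hp : ∀ a, 0 ≤ p a) (hp1 : ∑ a, p a = 1)
    (hq : ∀ a, 0 < q a) (hq1 : ∑ a, q a = 1) : 0 ≤ klD p q := by
  have key : ∀ a, p a * Real.log (q a / p a) ≤ q a - p a := by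
    intro a
    rcases eq_or_lt_of_le (hp a) with h | h
    · rw [← h]; simp
      exact (hq a).le
    · have hqa := hq a
      calc p a * Real.log (q a / p a) ≤ p a * (q a / p a - 1) :=
          mul_le_mul_of_nonneg_left (Real.log_le_sub_one_of_pos (by positivity)) (hp a)
        _ = q a - p a := by field_simp
  have hneg : ∀ a, p a * Real.log (p a / q a) = -(p a * Real.log (q a / p a)) := by
    intro a
    rcases eq_or_lt_of_le (hp a) with h | h
    · rw [← h]; ring
    · rw [show p a / q a = (q a / p a)⁻¹ from by rw [inv_div], Real.log_inv]; ring
  unfold klD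
  rw [Finset.sum_congr rfl (fun a _ => hneg a), Finset.sum_neg_distrib]
  have : ∑ a, p a * Real.log (q a / p a) ≤ ∑ a, (q a - p a) :=
    Finset.sum_le_sum (fun a _ => key a)
  rw [Finset.sum_sub_distrib, hq1, hp1, sub_self] at this
  linarith

lemma le_of_le_liminf {f : ℕ → ℝ} {θ K : ℝ} (h1 : θ ≤ Filter.liminf f Filter.atTop)
    (h2 : ∀ᶠ n in Filter.atTop, f n ≤ K) (hK : 0 ≤ K) : θ ≤ K := by
  rw [Filter.liminf_eq] at h1
  rcases Set.eq_empty_or_nonempty {a | ∀ᶠ n in Filter.atTop, a ≤ f n} with he | hne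
  · rw [he, Real.sSup_empty] at h1; linarith
  · refine h1.trans (csSup_le hne (fun a ha => ?_))
    obtain ⟨n, hn1, hn2⟩ := (ha.and h2).exists
    linarith

lemma le_liminf_of_ev {f : ℕ → ℝ} {θ C : ℝ} (hub : ∀ᶠ n in Filter.atTop, f n ≤ C)
    (h : ∀ c, c < θ → ∀ᶠ n in Filter.atTop, c ≤ f n) : θ ≤ Filter.liminf f Filter.atTop := by
  rw [Filter.liminf_eq]
  set S := {a | ∀ᶠ n in Filter.atTop, a ≤ f n} with hS
  have hbdd : BddAbove S := by
    refine ⟨C, fun a ha => ?_⟩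
    obtain ⟨n, hn1, hn2⟩ := (ha.and hub).exists
    linarith
  by_contra hcon
  push_neg at hcon
  have hmid : (sSup S + θ)/2 < θ := by linarith
  have hmem : (sSup S + θ)/2 ∈ S := h _ hmid
  have := le_csSup hbdd hmem
  linarith

lemma limsup_le_of_ev {f : ℕ → ℝ} {K L : ℝ} (hlb : ∀ᶠ n in Filter.atTop, L ≤ f n)
    (h : ∀ ε, 0 < ε → ∀ᶠ n in Filter.atTop, f n ≤ K + ε) :
    Filter.limsup f Filter.atTop ≤ K := by
  rw [Filter.limsup_eq]
  have hbdd : BddBelow {a | ∀ᶠ n in Filter.atTop, f n ≤ a} := by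
    refine ⟨L, fun a ha => ?_⟩
    obtain ⟨n, hn1, hn2⟩ := (ha.and hlb).exists
    linarith
  refine le_of_forall_pos_le_add (fun ε hε => ?_)
  exact csInf_le hbdd (h ε hε)

lemma eventually_le_of_limsup_le {f : ℕ → ℝ} {K b : ℝ} (hub : ∀ n, f n ≤ b)
    (h : Filter.limsup f Filter.atTop ≤ K) {K' : ℝ} (hK' : K < K') :
    ∀ᶠ n in Filter.atTop, f n ≤ K' := by
  have hb : Filter.IsBoundedUnder (· ≤ ·) Filter.atTop f :=
    ⟨b, Filter.eventually_map.2 (Filter.Eventually.of_forall hub)⟩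
  have := Filter.eventually_lt_of_limsup_lt (lt_of_le_of_lt h hK') hb
  exact this.mono (fun n hn => hn.le)


lemma converse_bound {p pb : γ → ℝ}
    (hp0 : ∀ a, 0 ≤ p a) (hp1 : ∑ a, p a = 1) (hpb : ∀ a, 0 < pb a)
    {ε θ : ℝ} (hε1 : ε < 1) (hθ0 : 0 ≤ θ) (hkl : 0 ≤ klD p pb)
    (A : ∀ n : ℕ, (Fin n → γ) → Prop)
    (hα : Filter.limsup (fun n => PrE p n (fun z => ¬ A n z)) Filter.atTop ≤ ε)
    (hθ : θ ≤ Filter.liminf (fun n : ℕ => -(1/(n:ℝ)) * Real.log (PrE pb n (A n))) Filter.atTop) :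
    θ ≤ klD p pb := by
  set D := klD p pb with hD
  set L : γ → ℝ := fun a => Real.log (p a / pb a) with hL
  have hmean : ∑ a, p a * L a = D := rfl
  set V : ℝ := ∑ a, p a * (L a - ∑ b, p b * L b)^2 with hV
  refine le_of_forall_pos_le_add (fun η hη => ?_)
  set δ : ℝ := η/2 with hδ
  have hδ0 : 0 < δ := by positivity
  set c₀ : ℝ := (1-ε)/4 with hc₀
  have hc₀0 : 0 < c₀ := by rw [hc₀]; linarith
  set G : ∀ n : ℕ, (Fin n → γ) → Prop :=
    fun n z => A n z ∧ (∀ t, 0 < p (z t)) ∧ (∑ t, L (z t) ≤ n * (D + δ)) with hG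
  -- step 1 : lower bound on PrE p n (G n) for n ≥ 1
  have step1 : ∀ n : ℕ, 1 ≤ n →
      1 - PrE p n (fun z => ¬ A n z) - (V/δ^2) * (1/n) ≤ PrE p n (G n) := by
    intro n hn
    have hn0 : (0:ℝ) < n := by exact_mod_cast hn
    have hsplit : ∀ z : Fin n → γ, A n z →
        G n z ∨ ((¬ ∀ t, 0 < p (z t)) ∨ ((n:ℝ)*δ ≤ |∑ t, L (z t) - n * (∑ a, p a * L a)|)) := by
      intro z hz
      by_cases hpos : ∀ t, 0 < p (z t)
      · by_cases hsum : ∑ t, L (z t) ≤ n * (D + δ)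
        · exact Or.inl ⟨hz, hpos, hsum⟩
        · push_neg at hsum
          refine Or.inr (Or.inr ?_)
          rw [hmean]
          have : (n:ℝ)*δ ≤ ∑ t, L (z t) - n * D := by nlinarith
          exact this.trans (le_abs_self _)
      · exact Or.inr (Or.inl hpos)
    have h1 : PrE p n (A n) ≤ PrE p n (G n)
        + (PrE p n (fun z => ¬ ∀ t, 0 < p (z t))
           + PrE p n (fun z => (n:ℝ)*δ ≤ |∑ t, L (z t) - n * (∑ a, p a * L a)|)) := by
      refine (PrE_subadd hp0 hsplit).trans ?_
      gcongr
      exact PrE_subadd hp0 (fun z h => h)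
    have h2 : PrE p n (fun z => (n:ℝ)*δ ≤ |∑ t, L (z t) - n * (∑ a, p a * L a)|)
        ≤ (V/δ^2) * (1/n) := by
      refine (cheb hp0 hp1 L (c := (n:ℝ)*δ) (by positivity)).trans ?_
      have h01 := hn0.ne'
      have h02 := hδ0.ne'
      have heq : (n:ℝ) * V / ((n:ℝ)*δ)^2 = V/δ^2 * (1/(n:ℝ)) := by
        field_simp
      rw [← hV, heq]
    have h3 : PrE p n (A n) = 1 - PrE p n (fun z => ¬ A n z) := by
      have := PrE_compl hp1 (p := p) (A n)
      linarith
    rw [PrE_null hp0 n] at h1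
    linarith
  -- step 2 : eventually the good event has probability ≥ c₀
  have ev1 : ∀ᶠ n in Filter.atTop, PrE p n (fun z => ¬ A n z) ≤ (1+ε)/2 :=
    eventually_le_of_limsup_le (fun n => PrE_le_one hp0 hp1 n _) hα (by linarith)
  have tendsto_aux : Filter.Tendsto (fun n : ℕ => (V/δ^2) * (1/n)) Filter.atTop (nhds 0) := by
    have := tendsto_one_div_atTop_nhds_zero_nat.const_mul (V/δ^2)
    simpa using this
  have ev2 : ∀ᶠ (n : ℕ) in Filter.atTop, (V/δ^2) * (1/(n:ℝ)) ≤ c₀ := by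
    have := tendsto_aux.eventually_lt_const hc₀0
    exact this.mono (fun n hn => hn.le)
  have ev3 : ∀ᶠ n in Filter.atTop, (1:ℕ) ≤ n := Filter.eventually_ge_atTop 1
  have evG : ∀ᶠ n in Filter.atTop, c₀ ≤ PrE p n (G n) := by
    filter_upwards [ev1, ev2, ev3] with n h1 h2 h3
    have := step1 n h3
    rw [hc₀]
    linarith
  -- step 3 : eventually the exponent is ≤ D + η
  have tendsto_aux2 : Filter.Tendsto (fun n : ℕ => (-Real.log c₀) * (1/n)) Filter.atTop (nhds 0) := by
    have := tendsto_one_div_atTop_nhds_zero_nat.const_mul (-Real.log c₀)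
    simpa using this
  have ev4 : ∀ᶠ (n : ℕ) in Filter.atTop, (-Real.log c₀) * (1/(n:ℝ)) ≤ δ := by
    have := tendsto_aux2.eventually_lt_const hδ0
    exact this.mono (fun n hn => hn.le)
  have evexp : ∀ᶠ (n : ℕ) in Filter.atTop,
      -(1/(n:ℝ)) * Real.log (PrE pb n (A n)) ≤ D + η := by
    filter_upwards [evG, ev3, ev4] with n hGn hn1 h4
    have hn0 : (0:ℝ) < n := by exact_mod_cast hn1
    have hlow : Real.exp (-((n:ℝ) * (D + δ))) * c₀ ≤ PrE pb n (A n) := by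
      have hc1 : Real.exp (-((n:ℝ) * (D + δ))) * PrE p n (G n) ≤ PrE pb n (G n) :=
        PrE_change_lower hp0 hpb (fun z hz => ⟨hz.2.1, hz.2.2⟩)
      have hc2 : PrE pb n (G n) ≤ PrE pb n (A n) :=
        PrE_mono (fun a => (hpb a).le) (fun z hz => hz.1)
      have hc3 : Real.exp (-((n:ℝ) * (D + δ))) * c₀
          ≤ Real.exp (-((n:ℝ) * (D + δ))) * PrE p n (G n) :=
        mul_le_mul_of_nonneg_left hGn (Real.exp_nonneg _)
      linarith
    have hpos : (0:ℝ) < Real.exp (-((n:ℝ) * (D + δ))) * c₀ := by positivity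
    have hlog : Real.log c₀ - (n:ℝ) * (D + δ) ≤ Real.log (PrE pb n (A n)) := by
      have := Real.log_le_log hpos hlow
      rw [Real.log_mul (Real.exp_ne_zero _) hc₀0.ne', Real.log_exp] at this
      linarith
    have hmul := mul_le_mul_of_nonpos_left hlog
      (neg_nonpos_of_nonneg (by positivity : (0:ℝ) ≤ 1/(n:ℝ)))
    have heq : -(1/(n:ℝ)) * (Real.log c₀ - (n:ℝ)*(D+δ)) = (D+δ) + (-Real.log c₀) * (1/(n:ℝ)) := by
      field_simp
      ring
    rw [heq] at hmul
    have : δ + δ = η := by rw [hδ]; ring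
    linarith
  exact le_of_le_liminf hθ evexp (by linarith)


end Generic


section Specific
variable {𝒳 𝒴₁ 𝒴₂ : Type*} [Fintype 𝒳] [Fintype 𝒴₁] [Fintype 𝒴₂]

def pXof (P : 𝒳 × 𝒴₁ × 𝒴₂ → ℝ) : 𝒳 → ℝ := fun a => ∑ b, ∑ c, P (a, b, c)

def qof (P : 𝒳 × 𝒴₁ × 𝒴₂ → ℝ) : 𝒳 × 𝒴₁ → ℝ := fun d => ∑ c, P (d.1, d.2, c)

lemma pXof_nonneg {P : 𝒳 × 𝒴₁ × 𝒴₂ → ℝ} (hP : ∀ e, 0 ≤ P e) (a : 𝒳) : 0 ≤ pXof P a :=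
  Finset.sum_nonneg fun b _ => Finset.sum_nonneg fun c _ => hP _

lemma qof_nonneg {P : 𝒳 × 𝒴₁ × 𝒴₂ → ℝ} (hP : ∀ e, 0 ≤ P e) (d : 𝒳 × 𝒴₁) : 0 ≤ qof P d :=
  Finset.sum_nonneg fun c _ => hP _

lemma qsum {P : 𝒳 × 𝒴₁ × 𝒴₂ → ℝ} (a : 𝒳) : ∑ b, qof P (a, b) = pXof P a := rfl

lemma sum_triple (P : 𝒳 × 𝒴₁ × 𝒴₂ → ℝ) :
    ∑ e : 𝒳 × 𝒴₁ × 𝒴₂, P e = ∑ a, ∑ b, ∑ c, P (a, b, c) := by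
  rw [Fintype.sum_prod_type]
  exact Finset.sum_congr rfl fun a _ => by rw [Fintype.sum_prod_type]

lemma sum_qof (P : 𝒳 × 𝒴₁ × 𝒴₂ → ℝ) (h1 : ∑ e, P e = 1) : ∑ d, qof P d = 1 := by
  rw [Fintype.sum_prod_type]
  rw [sum_triple] at h1
  exact h1

lemma sum_pXof (P : 𝒳 × 𝒴₁ × 𝒴₂ → ℝ) (h1 : ∑ e, P e = 1) : ∑ a, pXof P a = 1 := by
  rw [sum_triple] at h1
  exact h1

lemma qof_le_pXof {P : 𝒳 × 𝒴₁ × 𝒴₂ → ℝ} (hP : ∀ e, 0 ≤ P e) (a : 𝒳) (b : 𝒴₁) :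
    qof P (a, b) ≤ pXof P a := by
  rw [← qsum a]
  exact Finset.single_le_sum (fun b' _ => qof_nonneg hP _) (mem_univ b)

lemma P_le_qof {P : 𝒳 × 𝒴₁ × 𝒴₂ → ℝ} (hP : ∀ e, 0 ≤ P e) (a : 𝒳) (b : 𝒴₁) (c : 𝒴₂) :
    P (a, b, c) ≤ qof P (a, b) :=
  Finset.single_le_sum (f := fun c' => P (a, b, c')) (fun c' _ => hP _) (mem_univ c)

lemma qof_pos {Pb : 𝒳 × 𝒴₁ × 𝒴₂ → ℝ} [Nonempty 𝒴₂] (hpos : ∀ e, 0 < Pb e) (d : 𝒳 × 𝒴₁) :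
    0 < qof Pb d :=
  Finset.sum_pos (fun c _ => hpos _) univ_nonempty

lemma marg1 (P : 𝒳 × 𝒴₁ × 𝒴₂ → ℝ) (F : 𝒳 → ℝ) :
    ∑ d : 𝒳 × 𝒴₁, qof P d * F d.1 = ∑ a, pXof P a * F a := by
  rw [Fintype.sum_prod_type]
  refine Finset.sum_congr rfl fun a _ => ?_
  have h : ∑ b, qof P (a, b) * F (a, b).1 = ∑ b, qof P (a, b) * F a := rfl
  rw [h, ← Finset.sum_mul, qsum a]

lemma marg2 (P : 𝒳 × 𝒴₁ × 𝒴₂ → ℝ) (F : 𝒳 × 𝒴₁ → ℝ) :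
    ∑ e : 𝒳 × 𝒴₁ × 𝒴₂, P e * F (e.1, e.2.1) = ∑ d, qof P d * F d := by
  have h1 : ∑ e : 𝒳 × 𝒴₁ × 𝒴₂, P e * F (e.1, e.2.1)
      = ∑ a, ∑ b, ∑ c, P (a, b, c) * F (a, b) := by
    rw [Fintype.sum_prod_type]
    refine Finset.sum_congr rfl fun a _ => ?_
    rw [Fintype.sum_prod_type]
  rw [h1, Fintype.sum_prod_type]
  refine Finset.sum_congr rfl fun a _ => Finset.sum_congr rfl fun b _ => ?_
  rw [← Finset.sum_mul]
  rfl

lemma sum_pair_fun {α β : Type*} [Fintype α] [Fintype β] {n : ℕ}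
    (G : (Fin n → α) → (Fin n → β) → ℝ) :
    ∑ z : Fin n → α × β, G (fun t => (z t).1) (fun t => (z t).2) = ∑ x, ∑ y, G x y := by
  have h := Fintype.sum_equiv (Equiv.arrowProdEquivProdArrow (Fin n) (fun _ => α) (fun _ => β))
    (fun z => G (fun t => (z t).1) (fun t => (z t).2))
    (fun p : (Fin n → α) × (Fin n → β) => G p.1 p.2) (fun z => rfl)
  rw [h, Fintype.sum_prod_type]

lemma sum_triple_fun {n : ℕ}
    (G : (Fin n → 𝒳) → (Fin n → 𝒴₁) → (Fin n → 𝒴₂) → ℝ) :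
    ∑ z : Fin n → 𝒳 × 𝒴₁ × 𝒴₂,
      G (fun t => (z t).1) (fun t => (z t).2.1) (fun t => (z t).2.2)
      = ∑ x, ∑ y1, ∑ y2, G x y1 y2 := by
  rw [sum_pair_fun (fun x (w : Fin n → 𝒴₁ × 𝒴₂) =>
    G x (fun t => (w t).1) (fun t => (w t).2))]
  exact Finset.sum_congr rfl fun x _ => sum_pair_fun _

lemma bridge1 (P : 𝒳 × 𝒴₁ × 𝒴₂ → ℝ) {n : ℕ}
    (E : (Fin n → 𝒳) → (Fin n → 𝒴₁) → Prop) :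
    prn P n (fun x y1 _ => E x y1)
      = PrE (qof P) n (fun z => E (fun t => (z t).1) (fun t => (z t).2)) := by
  unfold prn PrE
  have step1 : ∀ (x : Fin n → 𝒳) (y1 : Fin n → 𝒴₁),
      (∑ y2 : Fin n → 𝒴₂, if E x y1 then ∏ t, P (x t, y1 t, y2 t) else 0)
        = if E x y1 then ∏ t, qof P (x t, y1 t) else 0 := by
    intro x y1
    by_cases h : E x y1
    · simp only [if_pos h]
      exact sum_prod_pi (fun t c => P (x t, y1 t, c))
    · simp [h]
  rw [Finset.sum_congr rfl fun x _ => Finset.sum_congr rfl fun y1 _ => step1 x y1]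
  rw [← sum_pair_fun (fun x y1 => if E x y1 then ∏ t, qof P (x t, y1 t) else 0)]
  rfl

lemma bridge2 (P : 𝒳 × 𝒴₁ × 𝒴₂ → ℝ) {n : ℕ}
    (E : (Fin n → 𝒳) → (Fin n → 𝒴₁) → (Fin n → 𝒴₂) → Prop) :
    prn P n E
      = PrE P n (fun z => E (fun t => (z t).1) (fun t => (z t).2.1) (fun t => (z t).2.2)) := by
  unfold prn PrE
  rw [← sum_triple_fun (fun x y1 y2 => if E x y1 y2 then ∏ t, P (x t, y1 t, y2 t) else 0)]
  rfl

lemma PrE_congr {γ : Type*} [Fintype γ] {p : γ → ℝ} {n : ℕ} {E F : (Fin n → γ) → Prop}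
    (h : ∀ z, E z ↔ F z) : PrE p n E = PrE p n F :=
  Finset.sum_congr rfl fun z _ => if_congr (h z) rfl rfl

end Specific


section Ach
variable {𝒳 𝒴₁ 𝒴₂ : Type*} [Fintype 𝒳] [Fintype 𝒴₁] [Fintype 𝒴₂]

def δseq (n : ℕ) : ℝ := (n : ℝ) ^ (-(4:ℝ)⁻¹)

lemma δseq_pos {n : ℕ} (hn : 1 ≤ n) : 0 < δseq n :=
  Real.rpow_pos_of_pos (by exact_mod_cast hn : (0:ℝ) < n) _

lemma δseq_nonneg (n : ℕ) : 0 ≤ δseq n := Real.rpow_nonneg (Nat.cast_nonneg n) _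

lemma tendsto_δseq : Filter.Tendsto δseq Filter.atTop (nhds 0) :=
  (tendsto_rpow_neg_atTop (by norm_num : (0:ℝ) < (4:ℝ)⁻¹)).comp
    tendsto_natCast_atTop_atTop

def chebBd (V : ℝ) (n : ℕ) : ℝ := (n:ℝ) * V / ((n:ℝ) * δseq n)^2

lemma tendsto_chebBd (V : ℝ) : Filter.Tendsto (chebBd V) Filter.atTop (nhds 0) := by
  have hev : ∀ᶠ (n : ℕ) in Filter.atTop, V * ((n:ℝ) ^ (-(2:ℝ)⁻¹)) = chebBd V n := by
    filter_upwards [Filter.eventually_ge_atTop 1] with n hn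
    have hn0 : (0:ℝ) < n := by exact_mod_cast hn
    unfold chebBd δseq
    have h1 : (n:ℝ) * (n:ℝ) ^ (-(4:ℝ)⁻¹) = (n:ℝ) ^ ((3:ℝ)/4) := by
      nth_rewrite 1 [← Real.rpow_one (n:ℝ)]
      rw [← Real.rpow_add hn0]
      norm_num
    rw [h1]
    have h2 : ((n:ℝ) ^ ((3:ℝ)/4))^2 = (n:ℝ) ^ ((3:ℝ)/2) := by
      rw [← Real.rpow_natCast ((n:ℝ) ^ ((3:ℝ)/4)) 2, ← Real.rpow_mul hn0.le]
      norm_num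
    rw [h2]
    rw [show ((n:ℝ) * V / (n:ℝ) ^ ((3:ℝ)/2)) = V * ((n:ℝ) / (n:ℝ) ^ ((3:ℝ)/2)) by ring]
    nth_rewrite 2 [← Real.rpow_one (n:ℝ)]
    rw [← Real.rpow_sub hn0]
    norm_num
  have h0 : Filter.Tendsto (fun n : ℕ => V * ((n:ℝ) ^ (-(2:ℝ)⁻¹))) Filter.atTop (nhds 0) := by
    have := ((tendsto_rpow_neg_atTop (by norm_num : (0:ℝ) < (2:ℝ)⁻¹)).comp
      (tendsto_natCast_atTop_atTop (R := ℝ))).const_mul V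
    simpa using this
  exact h0.congr' hev

def H1of (P : 𝒳 × 𝒴₁ × 𝒴₂ → ℝ) : ℝ := ∑ a, pXof P a * (-Real.log (pXof P a))

def wof (P : 𝒳 × 𝒴₁ × 𝒴₂ → ℝ) (d : 𝒳 × 𝒴₁) : ℝ := qof P d / pXof P d.1

def H2of (P : 𝒳 × 𝒴₁ × 𝒴₂ → ℝ) : ℝ := ∑ d, qof P d * (-Real.log (wof P d))

def T1 (P : 𝒳 × 𝒴₁ × 𝒴₂ → ℝ) (n : ℕ) : Finset (Fin n → 𝒳) :=
  univ.filter (fun x => Real.exp (-((n:ℝ) * (H1of P + δseq n))) ≤ ∏ t, pXof P (x t))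

def T2 (P : 𝒳 × 𝒴₁ × 𝒴₂ → ℝ) (n : ℕ) (x : Fin n → 𝒳) : Finset (Fin n → 𝒴₁) :=
  univ.filter (fun y => Real.exp (-((n:ℝ) * (H2of P + δseq n))) ≤ ∏ t, wof P (x t, y t))

def N2of (P : 𝒳 × 𝒴₁ × 𝒴₂ → ℝ) (n : ℕ) : ℕ := ⌈Real.exp ((n:ℝ) * (H2of P + δseq n))⌉₊

def enc1 (P : 𝒳 × 𝒴₁ × 𝒴₂ → ℝ) (n : ℕ) : {x // x ∈ T1 P n} ≃ Fin (T1 P n).card :=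
  Fintype.equivFinOfCardEq (Fintype.card_coe _)

def enc2 (P : 𝒳 × 𝒴₁ × 𝒴₂ → ℝ) (n : ℕ) (x : Fin n → 𝒳) :
    {y // y ∈ T2 P n x} ≃ Fin (T2 P n x).card :=
  Fintype.equivFinOfCardEq (Fintype.card_coe _)

def Cond1 (P Pb : 𝒳 × 𝒴₁ × 𝒴₂ → ℝ) (n : ℕ) (x : Fin n → 𝒳) (y : Fin n → 𝒴₁) : Prop :=
  (∀ t, 0 < qof P (x t, y t)) ∧
  (n:ℝ) * (klD (qof P) (qof Pb) - δseq n)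
    ≤ ∑ t, Real.log (qof P (x t, y t) / qof Pb (x t, y t))

def Cond2 (P Pb : 𝒳 × 𝒴₁ × 𝒴₂ → ℝ) (n : ℕ) (x : Fin n → 𝒳) (y1 : Fin n → 𝒴₁)
    (y2 : Fin n → 𝒴₂) : Prop :=
  (∀ t, 0 < P (x t, y1 t, y2 t)) ∧
  (n:ℝ) * (klD P Pb - δseq n)
    ≤ ∑ t, Real.log (P (x t, y1 t, y2 t) / Pb (x t, y1 t, y2 t))

def decode1 (P : 𝒳 × 𝒴₁ × 𝒴₂ → ℝ) (n : ℕ) (m : ℕ) : Option {x // x ∈ T1 P n} :=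
  if h : m < (T1 P n).card then some ((enc1 P n).symm ⟨m, h⟩) else none

def decode2 (P : 𝒳 × 𝒴₁ × 𝒴₂ → ℝ) (n : ℕ) (x : Fin n → 𝒳) (m : ℕ) :
    Option {y // y ∈ T2 P n x} :=
  if h : m < (T2 P n x).card then some ((enc2 P n x).symm ⟨m, h⟩) else none

def achScheme (P Pb : 𝒳 × 𝒴₁ × 𝒴₂ → ℝ) (n : ℕ) : Scheme 𝒳 𝒴₁ 𝒴₂ n where
  m₁ := (T1 P n).card + 1
  m₂ := N2of P n + 1
  φ₁ := fun x => if hx : x ∈ T1 P n then Fin.castSucc (enc1 P n ⟨x, hx⟩) else Fin.last _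
  φ₂ := fun my => (decode1 P n (my.1 : ℕ)).elim ⟨N2of P n, Nat.lt_succ_self _⟩
      (fun xh => if hy : my.2 ∈ T2 P n xh.1 then
        ⟨min ((enc2 P n xh.1 ⟨my.2, hy⟩ : Fin _) : ℕ) (N2of P n),
          Nat.lt_succ_of_le (min_le_right _ _)⟩
        else ⟨N2of P n, Nat.lt_succ_self _⟩)
  ψ₁ := fun my => (decode1 P n (my.1 : ℕ)).elim true
      (fun xh => if Cond1 P Pb n xh.1 my.2 then false else true)
  ψ₂ := fun mmy => (decode1 P n (mmy.1 : ℕ)).elim true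
      (fun xh => (decode2 P n xh.1 (mmy.2.1 : ℕ)).elim true
        (fun yh => if Cond2 P Pb n xh.1 yh.1 mmy.2.2 then false else true))

lemma phi1_pos (P Pb : 𝒳 × 𝒴₁ × 𝒴₂ → ℝ) (n : ℕ) {x : Fin n → 𝒳} (hx : x ∈ T1 P n) :
    (achScheme P Pb n).φ₁ x = Fin.castSucc (enc1 P n ⟨x, hx⟩) := dif_pos hx

lemma phi1_neg (P Pb : 𝒳 × 𝒴₁ × 𝒴₂ → ℝ) (n : ℕ) {x : Fin n → 𝒳} (hx : x ∉ T1 P n) :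
    (achScheme P Pb n).φ₁ x = Fin.last _ := dif_neg hx

lemma decode1_enc (P Pb : 𝒳 × 𝒴₁ × 𝒴₂ → ℝ) (n : ℕ) {x : Fin n → 𝒳} (hx : x ∈ T1 P n) :
    decode1 P n ((achScheme P Pb n).φ₁ x).val = some ⟨x, hx⟩ := by
  rw [phi1_pos P Pb n hx]
  unfold decode1
  have hlt : (Fin.castSucc (enc1 P n ⟨x, hx⟩)).val < (T1 P n).card := by
    simpa using (enc1 P n ⟨x, hx⟩).isLt
  rw [dif_pos hlt]
  congr 1
  have h2 : (⟨(Fin.castSucc (enc1 P n ⟨x, hx⟩)).val, hlt⟩ :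
      Fin (T1 P n).card) = enc1 P n ⟨x, hx⟩ := Fin.ext (by simp)
  rw [h2, Equiv.symm_apply_apply]

lemma decode1_err (P Pb : 𝒳 × 𝒴₁ × 𝒴₂ → ℝ) (n : ℕ) {x : Fin n → 𝒳} (hx : x ∉ T1 P n) :
    decode1 P n ((achScheme P Pb n).φ₁ x).val = none := by
  rw [phi1_neg P Pb n hx]
  unfold decode1
  rw [dif_neg (by simp)]

lemma phi2_eq (P Pb : 𝒳 × 𝒴₁ × 𝒴₂ → ℝ) (n : ℕ) (m : Fin ((achScheme P Pb n).m₁))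
    (y : Fin n → 𝒴₁) :
    (achScheme P Pb n).φ₂ (m, y) = (decode1 P n m.val).elim ⟨N2of P n, Nat.lt_succ_self _⟩
      (fun xh => if hy : y ∈ T2 P n xh.1 then
        ⟨min ((enc2 P n xh.1 ⟨y, hy⟩ : Fin _) : ℕ) (N2of P n),
          Nat.lt_succ_of_le (min_le_right _ _)⟩
        else ⟨N2of P n, Nat.lt_succ_self _⟩) := rfl

lemma psi1_eq (P Pb : 𝒳 × 𝒴₁ × 𝒴₂ → ℝ) (n : ℕ) (m : Fin ((achScheme P Pb n).m₁))
    (y : Fin n → 𝒴₁) :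
    (achScheme P Pb n).ψ₁ (m, y) = (decode1 P n m.val).elim true
      (fun xh => if Cond1 P Pb n xh.1 y then false else true) := rfl

lemma psi2_eq (P Pb : 𝒳 × 𝒴₁ × 𝒴₂ → ℝ) (n : ℕ) (m1 : Fin ((achScheme P Pb n).m₁))
    (m2 : Fin ((achScheme P Pb n).m₂)) (y2 : Fin n → 𝒴₂) :
    (achScheme P Pb n).ψ₂ (m1, m2, y2) = (decode1 P n m1.val).elim true
      (fun xh => (decode2 P n xh.1 m2.val).elim true
        (fun yh => if Cond2 P Pb n xh.1 yh.1 y2 then false else true)) := rfl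

lemma phi2_enc (P Pb : 𝒳 × 𝒴₁ × 𝒴₂ → ℝ) (n : ℕ) {x : Fin n → 𝒳} {y : Fin n → 𝒴₁}
    (hx : x ∈ T1 P n) (hy : y ∈ T2 P n x) (hcard : (T2 P n x).card ≤ N2of P n) :
    decode2 P n x ((achScheme P Pb n).φ₂ ((achScheme P Pb n).φ₁ x, y)).val
      = some ⟨y, hy⟩ := by
  rw [phi2_eq, decode1_enc P Pb n hx]
  simp only [Option.elim_some, dif_pos hy]
  unfold decode2
  have hidx : ((enc2 P n x ⟨y, hy⟩ : Fin (T2 P n x).card) : ℕ) ≤ N2of P n :=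
    le_of_lt (lt_of_lt_of_le (enc2 P n x ⟨y, hy⟩).isLt hcard)
  have hmin : min ((enc2 P n x ⟨y, hy⟩ : Fin (T2 P n x).card) : ℕ) (N2of P n)
      = ((enc2 P n x ⟨y, hy⟩ : Fin (T2 P n x).card) : ℕ) := min_eq_left hidx
  have hlt2 : ((⟨min ((enc2 P n x ⟨y, hy⟩ : Fin (T2 P n x).card) : ℕ) (N2of P n),
      Nat.lt_succ_of_le (min_le_right _ _)⟩ : Fin (N2of P n + 1)) : ℕ)
      < (T2 P n x).card := by
    simpa [hmin] using (enc2 P n x ⟨y, hy⟩).isLt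
  rw [dif_pos hlt2]
  congr 1
  have h3 : (⟨((⟨min ((enc2 P n x ⟨y, hy⟩ : Fin (T2 P n x).card) : ℕ) (N2of P n),
      Nat.lt_succ_of_le (min_le_right _ _)⟩ : Fin (N2of P n + 1)) : ℕ), hlt2⟩ :
      Fin (T2 P n x).card) = enc2 P n x ⟨y, hy⟩ := Fin.ext (by simpa using hmin)
  rw [h3, Equiv.symm_apply_apply]

lemma phi2_err (P Pb : 𝒳 × 𝒴₁ × 𝒴₂ → ℝ) (n : ℕ) {x : Fin n → 𝒳} {y : Fin n → 𝒴₁}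
    (hx : x ∈ T1 P n) (hy : y ∉ T2 P n x) (hcard : (T2 P n x).card ≤ N2of P n) :
    decode2 P n x ((achScheme P Pb n).φ₂ ((achScheme P Pb n).φ₁ x, y)).val = none := by
  rw [phi2_eq, decode1_enc P Pb n hx]
  simp only [Option.elim_some, dif_neg hy]
  unfold decode2
  rw [dif_neg (by simpa using hcard)]

lemma dec1_char (P Pb : 𝒳 × 𝒴₁ × 𝒴₂ → ℝ) (n : ℕ) (x : Fin n → 𝒳) (y : Fin n → 𝒴₁) :
    dec1 (achScheme P Pb n) x y = false ↔ (x ∈ T1 P n ∧ Cond1 P Pb n x y) := by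
  unfold dec1
  rw [psi1_eq]
  by_cases hx : x ∈ T1 P n
  · rw [decode1_enc P Pb n hx]
    simp only [Option.elim_some]
    split_ifs with hc
    · simp [hx, hc]
    · simp [hx, hc]
  · rw [decode1_err P Pb n hx]
    simp [hx]

lemma dec2_char (P Pb : 𝒳 × 𝒴₁ × 𝒴₂ → ℝ) (n : ℕ)
    (hcard : ∀ x' ∈ T1 P n, (T2 P n x').card ≤ N2of P n)
    (x : Fin n → 𝒳) (y1 : Fin n → 𝒴₁) (y2 : Fin n → 𝒴₂) :
    dec2 (achScheme P Pb n) x y1 y2 = false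
      ↔ (x ∈ T1 P n ∧ y1 ∈ T2 P n x ∧ Cond2 P Pb n x y1 y2) := by
  unfold dec2
  rw [psi2_eq]
  by_cases hx : x ∈ T1 P n
  · rw [decode1_enc P Pb n hx]
    simp only [Option.elim_some]
    by_cases hy : y1 ∈ T2 P n x
    · rw [phi2_enc P Pb n hx hy (hcard x hx)]
      simp only [Option.elim_some]
      split_ifs with hc
      · simp [hx, hy, hc]
      · simp [hx, hy, hc]
    · rw [phi2_err P Pb n hx hy (hcard x hx)]
      simp [hy]
  · rw [decode1_err P Pb n hx]
    simp [hx]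

lemma prod_pos_each {n : ℕ} {f : Fin n → ℝ} (h0 : ∀ t, 0 ≤ f t) {r : ℝ} (hr : 0 < r)
    (hprod : r ≤ ∏ t, f t) (t : Fin n) : 0 < f t := by
  rcases eq_or_lt_of_le (h0 t) with h | h
  · exfalso
    have : (∏ s, f s) = 0 := Finset.prod_eq_zero (mem_univ t) h.symm
    rw [this] at hprod
    linarith
  · exact h

lemma card_filter_le {β : Type*} [Fintype β] {n : ℕ} (f : Fin n → β → ℝ)
    (hf0 : ∀ t b, 0 ≤ f t b) (hf1 : ∀ t, ∑ b, f t b = 1) {r : ℝ} (hr : 0 < r) :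
    ((univ.filter (fun y : Fin n → β => r ≤ ∏ t, f t (y t))).card : ℝ) ≤ r⁻¹ := by
  set s := univ.filter (fun y : Fin n → β => r ≤ ∏ t, f t (y t)) with hs
  have h1 : (s.card : ℝ) * r ≤ ∑ y ∈ s, ∏ t, f t (y t) := by
    have := Finset.card_nsmul_le_sum s (fun y => ∏ t, f t (y t)) r
      (fun y hy => (Finset.mem_filter.1 hy).2)
    simpa [nsmul_eq_mul] using this
  have h2 : ∑ y ∈ s, ∏ t, f t (y t) ≤ ∑ y : Fin n → β, ∏ t, f t (y t) :=
    Finset.sum_le_sum_of_subset_of_nonneg (Finset.filter_subset _ _)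
      (fun y _ _ => Finset.prod_nonneg (fun t _ => hf0 t (y t)))
  have h3 : ∑ y : Fin n → β, ∏ t, f t (y t) = 1 := by
    rw [sum_prod_pi f]
    simp [hf1]
  rw [h3] at h2
  have h4 : (s.card : ℝ) * r ≤ 1 := le_trans h1 h2
  rw [← one_div, le_div_iff₀ hr]
  exact h4

lemma card_T1_le {P : 𝒳 × 𝒴₁ × 𝒴₂ → ℝ} (hP0 : ∀ e, 0 ≤ P e) (hP1 : ∑ e, P e = 1)
    (n : ℕ) : ((T1 P n).card : ℝ) ≤ Real.exp ((n:ℝ) * (H1of P + δseq n)) := by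
  have h0 := card_filter_le (n := n) (fun _ a => pXof P a)
    (fun _ a => pXof_nonneg hP0 a) (fun _ => sum_pXof P hP1)
    (Real.exp_pos (-((n:ℝ) * (H1of P + δseq n))))
  have h2 : ((T1 P n).card : ℝ) ≤ (Real.exp (-((n:ℝ) * (H1of P + δseq n))))⁻¹ := h0
  rw [Real.exp_neg, inv_inv] at h2
  exact h2

lemma T1_pos {P : 𝒳 × 𝒴₁ × 𝒴₂ → ℝ} (hP0 : ∀ e, 0 ≤ P e) {n : ℕ} {x : Fin n → 𝒳}
    (hx : x ∈ T1 P n) (t : Fin n) : 0 < pXof P (x t) := by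
  have hmem := (Finset.mem_filter.1 hx).2
  exact prod_pos_each (fun s => pXof_nonneg hP0 (x s)) (Real.exp_pos _) hmem t

lemma card_T2_le {P : 𝒳 × 𝒴₁ × 𝒴₂ → ℝ} (hP0 : ∀ e, 0 ≤ P e) {n : ℕ} {x : Fin n → 𝒳}
    (hx : ∀ t, 0 < pXof P (x t)) :
    ((T2 P n x).card : ℝ) ≤ Real.exp ((n:ℝ) * (H2of P + δseq n)) := by
  have hw1 : ∀ t : Fin n, ∑ b, wof P (x t, b) = 1 := by
    intro t
    have hb : ∀ b, wof P (x t, b) = qof P (x t, b) / pXof P (x t) := fun b => rfl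
    rw [Finset.sum_congr rfl fun b _ => hb b, ← Finset.sum_div, qsum (x t)]
    exact div_self (hx t).ne'
  have h0 := card_filter_le (n := n) (fun t b => wof P (x t, b))
    (fun t b => div_nonneg (qof_nonneg hP0 _) (pXof_nonneg hP0 _))
    hw1 (Real.exp_pos (-((n:ℝ) * (H2of P + δseq n))))
  have h2 : ((T2 P n x).card : ℝ) ≤ (Real.exp (-((n:ℝ) * (H2of P + δseq n))))⁻¹ := h0
  rw [Real.exp_neg, inv_inv] at h2
  exact h2

lemma card_T2_le_N2of {P : 𝒳 × 𝒴₁ × 𝒴₂ → ℝ} (hP0 : ∀ e, 0 ≤ P e) {n : ℕ}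
    {x : Fin n → 𝒳} (hx : x ∈ T1 P n) : (T2 P n x).card ≤ N2of P n := by
  have h := card_T2_le hP0 (fun t => T1_pos hP0 hx t) (n := n)
  have h2 : ((T2 P n x).card : ℝ) ≤ (N2of P n : ℝ) :=
    h.trans (Nat.le_ceil _)
  exact_mod_cast h2

lemma H1of_eq (P : 𝒳 × 𝒴₁ × 𝒴₂ → ℝ) : H1of P = pmfEnt (pXof P) := by
  unfold H1of pmfEnt
  rw [← Finset.sum_neg_distrib]
  exact Finset.sum_congr rfl fun a _ => by ring

lemma entropy_nonneg {β : Type*} [Fintype β] {p : β → ℝ} (hp0 : ∀ b, 0 ≤ p b)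
    (hp1 : ∑ b, p b = 1) : 0 ≤ pmfEnt p := by
  unfold pmfEnt
  rw [← Finset.sum_neg_distrib]
  refine Finset.sum_nonneg fun b _ => ?_
  rcases eq_or_lt_of_le (hp0 b) with h | h
  · rw [← h]; simp
  · have hb1 : p b ≤ 1 := by
      rw [← hp1]
      exact Finset.single_le_sum (fun c _ => hp0 c) (mem_univ b)
    have := Real.log_nonpos (hp0 b) hb1
    nlinarith

lemma H2of_nonneg {P : 𝒳 × 𝒴₁ × 𝒴₂ → ℝ} (hP0 : ∀ e, 0 ≤ P e) : 0 ≤ H2of P := by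
  unfold H2of
  refine Finset.sum_nonneg fun d _ => ?_
  rcases eq_or_lt_of_le (qof_nonneg hP0 d) with h | h
  · rw [← h]; simp
  · have hpX : 0 < pXof P d.1 := lt_of_lt_of_le h (by
      rcases d with ⟨a, b⟩
      exact qof_le_pXof hP0 a b)
    have hw1 : wof P d ≤ 1 := by
      unfold wof
      rw [div_le_one hpX]
      rcases d with ⟨a, b⟩
      exact qof_le_pXof hP0 a b
    have hw0 : 0 ≤ wof P d := div_nonneg (qof_nonneg hP0 d) hpX.le
    have := Real.log_nonpos hw0 hw1
    nlinarith

lemma H2of_eq {P : 𝒳 × 𝒴₁ × 𝒴₂ → ℝ} (hP0 : ∀ e, 0 ≤ P e) :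
    H2of P = pmfEnt (qof P) - pmfEnt (pXof P) := by
  unfold H2of pmfEnt
  have key : ∀ d : 𝒳 × 𝒴₁, qof P d * (-Real.log (wof P d))
      = -(qof P d * Real.log (qof P d)) + qof P d * Real.log (pXof P d.1) := by
    intro d
    rcases eq_or_lt_of_le (qof_nonneg hP0 d) with h | h
    · rw [← h]; ring
    · have hpX : 0 < pXof P d.1 := lt_of_lt_of_le h (by
        rcases d with ⟨a, b⟩
        exact qof_le_pXof hP0 a b)
      unfold wof
      rw [Real.log_div h.ne' hpX.ne']
      ring
  rw [Finset.sum_congr rfl fun d _ => key d, Finset.sum_add_distrib,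
    Finset.sum_neg_distrib]
  have h2 : ∑ d : 𝒳 × 𝒴₁, qof P d * Real.log (pXof P d.1)
      = ∑ a, pXof P a * Real.log (pXof P a) := marg1 P (fun a => Real.log (pXof P a))
  rw [h2]
  ring

lemma PrE_exists_of_pos {γ : Type*} [Fintype γ] {p : γ → ℝ} {n : ℕ}
    {E : (Fin n → γ) → Prop} (h : 0 < PrE p n E) : ∃ z, E z := by
  by_contra hc
  push_neg at hc
  have : PrE p n E = 0 := Finset.sum_eq_zero fun z _ => if_neg (hc z)
  rw [this] at h
  exact lt_irrefl 0 h

lemma PrE_ge_single {γ : Type*} [Fintype γ] {p : γ → ℝ} (hp : ∀ a, 0 ≤ p a) {n : ℕ}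
    {E : (Fin n → γ) → Prop} {z : Fin n → γ} (hz : E z) : Pw p z ≤ PrE p n E := by
  have h := Finset.single_le_sum (f := fun w => if E w then Pw p w else 0)
    (fun w _ => by split_ifs; exacts [Pw_nonneg hp w, le_refl 0]) (mem_univ z)
  rwa [if_pos hz] at h

lemma Pw_ge_pow {γ : Type*} [Fintype γ] {p : γ → ℝ} {m : ℝ} (hm : 0 ≤ m)
    (hmp : ∀ a, m ≤ p a) {n : ℕ} (z : Fin n → γ) : m ^ n ≤ Pw p z := by
  unfold Pw
  calc m ^ n = ∏ _t : Fin n, m := by rw [Finset.prod_const, Finset.card_fin]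
    _ ≤ ∏ t, p (z t) := Finset.prod_le_prod (fun t _ => hm) (fun t _ => hmp (z t))

def g1f (P : 𝒳 × 𝒴₁ × 𝒴₂ → ℝ) : 𝒳 × 𝒴₁ → ℝ := fun d => -Real.log (pXof P d.1)

def L1f (P Pb : 𝒳 × 𝒴₁ × 𝒴₂ → ℝ) : 𝒳 × 𝒴₁ → ℝ :=
  fun d => Real.log (qof P d / qof Pb d)

def g2f (P : 𝒳 × 𝒴₁ × 𝒴₂ → ℝ) : 𝒳 × 𝒴₁ → ℝ := fun d => -Real.log (wof P d)

def g1t (P : 𝒳 × 𝒴₁ × 𝒴₂ → ℝ) : 𝒳 × 𝒴₁ × 𝒴₂ → ℝ := fun e => g1f P (e.1, e.2.1)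

def g2t (P : 𝒳 × 𝒴₁ × 𝒴₂ → ℝ) : 𝒳 × 𝒴₁ × 𝒴₂ → ℝ := fun e => g2f P (e.1, e.2.1)

def L2f (P Pb : 𝒳 × 𝒴₁ × 𝒴₂ → ℝ) : 𝒳 × 𝒴₁ × 𝒴₂ → ℝ :=
  fun e => Real.log (P e / Pb e)

lemma g1f_mean (P : 𝒳 × 𝒴₁ × 𝒴₂ → ℝ) : ∑ d, qof P d * g1f P d = H1of P :=
  marg1 P (fun a => -Real.log (pXof P a))

lemma g2f_mean (P : 𝒳 × 𝒴₁ × 𝒴₂ → ℝ) : ∑ d, qof P d * g2f P d = H2of P := rfl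

lemma L1f_mean (P Pb : 𝒳 × 𝒴₁ × 𝒴₂ → ℝ) :
    ∑ d, qof P d * L1f P Pb d = klD (qof P) (qof Pb) := rfl

lemma g1t_mean (P : 𝒳 × 𝒴₁ × 𝒴₂ → ℝ) : ∑ e, P e * g1t P e = H1of P :=
  (marg2 P (g1f P)).trans (g1f_mean P)

lemma g2t_mean (P : 𝒳 × 𝒴₁ × 𝒴₂ → ℝ) : ∑ e, P e * g2t P e = H2of P :=
  (marg2 P (g2f P)).trans (g2f_mean P)

lemma L2f_mean (P Pb : 𝒳 × 𝒴₁ × 𝒴₂ → ℝ) : ∑ e, P e * L2f P Pb e = klD P Pb := rfl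

def Vq (P : 𝒳 × 𝒴₁ × 𝒴₂ → ℝ) (g : 𝒳 × 𝒴₁ → ℝ) : ℝ :=
  ∑ d, qof P d * (g d - ∑ d', qof P d' * g d')^2

def Vt (P : 𝒳 × 𝒴₁ × 𝒴₂ → ℝ) (g : 𝒳 × 𝒴₁ × 𝒴₂ → ℝ) : ℝ :=
  ∑ e, P e * (g e - ∑ e', P e' * g e')^2

/-- the acceptance event of detector 1, as an event on paired strings. -/
def A1ev (P Pb : 𝒳 × 𝒴₁ × 𝒴₂ → ℝ) (n : ℕ) (z : Fin n → 𝒳 × 𝒴₁) : Prop :=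
  (fun t => (z t).1) ∈ T1 P n ∧ Cond1 P Pb n (fun t => (z t).1) (fun t => (z t).2)

/-- the acceptance event of detector 2, as an event on paired strings. -/
def A2ev (P Pb : 𝒳 × 𝒴₁ × 𝒴₂ → ℝ) (n : ℕ) (z : Fin n → 𝒳 × 𝒴₁ × 𝒴₂) : Prop :=
  (fun t => (z t).1) ∈ T1 P n ∧ (fun t => (z t).2.1) ∈ T2 P n (fun t => (z t).1) ∧
    Cond2 P Pb n (fun t => (z t).1) (fun t => (z t).2.1) (fun t => (z t).2.2)

lemma alpha1_eq (P Pb : 𝒳 × 𝒴₁ × 𝒴₂ → ℝ) (n : ℕ) :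
    α1 P (achScheme P Pb n) = PrE (qof P) n (fun z => ¬ A1ev P Pb n z) := by
  unfold α1
  rw [bridge1]
  refine PrE_congr fun z => ?_
  rw [show A1ev P Pb n z ↔ dec1 (achScheme P Pb n) (fun t => (z t).1) (fun t => (z t).2)
    = false from (dec1_char P Pb n _ _).symm]
  rcases Bool.eq_false_or_eq_true
    (dec1 (achScheme P Pb n) (fun t => (z t).1) (fun t => (z t).2)) with hb | hb <;>
    simp [hb]

lemma beta1_eq (P Pb : 𝒳 × 𝒴₁ × 𝒴₂ → ℝ) (n : ℕ) :
    β1 Pb (achScheme P Pb n) = PrE (qof Pb) n (fun z => A1ev P Pb n z) := by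
  unfold β1
  rw [bridge1]
  exact PrE_congr fun z => (dec1_char P Pb n _ _)

lemma alpha2_eq (P Pb : 𝒳 × 𝒴₁ × 𝒴₂ → ℝ)
    (hP0 : ∀ e, 0 ≤ P e) (n : ℕ) :
    α2 P (achScheme P Pb n) = PrE P n (fun z => ¬ A2ev P Pb n z) := by
  unfold α2
  rw [bridge2]
  refine PrE_congr fun z => ?_
  rw [show A2ev P Pb n z ↔ dec2 (achScheme P Pb n) (fun t => (z t).1) (fun t => (z t).2.1)
      (fun t => (z t).2.2) = false from
    (dec2_char P Pb n (fun x' hx' => card_T2_le_N2of hP0 hx') _ _ _).symm]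
  rcases Bool.eq_false_or_eq_true (dec2 (achScheme P Pb n) (fun t => (z t).1)
    (fun t => (z t).2.1) (fun t => (z t).2.2)) with hb | hb <;> simp [hb]

lemma beta2_eq (P Pb : 𝒳 × 𝒴₁ × 𝒴₂ → ℝ) (hP0 : ∀ e, 0 ≤ P e) (n : ℕ) :
    β2 Pb (achScheme P Pb n) = PrE Pb n (fun z => A2ev P Pb n z) := by
  unfold β2
  rw [bridge2]
  exact PrE_congr fun z =>
    dec2_char P Pb n (fun x' hx' => card_T2_le_N2of hP0 hx') _ _ _

lemma alpha1_bound (P Pb : 𝒳 × 𝒴₁ × 𝒴₂ → ℝ) (hP0 : ∀ e, 0 ≤ P e) (hP1 : ∑ e, P e = 1)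
    {n : ℕ} (hn : 1 ≤ n) :
    α1 P (achScheme P Pb n) ≤ chebBd (Vq P (g1f P)) n + chebBd (Vq P (L1f P Pb)) n := by
  have hq0 : ∀ d, 0 ≤ qof P d := qof_nonneg hP0
  have hq1 : ∑ d, qof P d = 1 := sum_qof P hP1
  have hn0 : (0:ℝ) < n := by exact_mod_cast hn
  have hδ := δseq_pos hn
  rw [alpha1_eq]
  have hsplit : ∀ z : Fin n → 𝒳 × 𝒴₁, ¬ A1ev P Pb n z →
      (¬ ∀ t, 0 < qof P (z t)) ∨
      (((n:ℝ) * δseq n ≤ |∑ t, g1f P (z t) - n * (∑ d, qof P d * g1f P d)|) ∨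
       ((n:ℝ) * δseq n ≤ |∑ t, L1f P Pb (z t) - n * (∑ d, qof P d * L1f P Pb d)|)) := by
    intro z hz
    by_cases hpos : ∀ t, 0 < qof P (z t)
    · by_cases hb1 : (n:ℝ) * δseq n ≤ |∑ t, g1f P (z t) - n * (∑ d, qof P d * g1f P d)|
      · exact Or.inr (Or.inl hb1)
      · by_cases hb2 : (n:ℝ) * δseq n
            ≤ |∑ t, L1f P Pb (z t) - n * (∑ d, qof P d * L1f P Pb d)|
        · exact Or.inr (Or.inr hb2)
        · exfalso
          apply hz
          push_neg at hb1 hb2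
          rw [g1f_mean] at hb1
          rw [L1f_mean] at hb2
          have habs1 := abs_lt.1 hb1
          have habs2 := abs_lt.1 hb2
          have hpX : ∀ t, 0 < pXof P ((z t).1) :=
            fun t => lt_of_lt_of_le (hpos t) (qof_le_pXof hP0 (z t).1 (z t).2)
          constructor
          · rw [T1, Finset.mem_filter]
            refine ⟨mem_univ _, ?_⟩
            have hprod : ∏ t, pXof P ((z t).1)
                = Real.exp (∑ t, Real.log (pXof P ((z t).1))) := by
              rw [Real.exp_sum]
              exact Finset.prod_congr rfl fun t _ => (Real.exp_log (hpX t)).symm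
            have h2 : ∑ t, Real.log (pXof P ((z t).1)) = -∑ t, g1f P (z t) := by
              rw [← Finset.sum_neg_distrib]
              exact Finset.sum_congr rfl fun t _ => by unfold g1f; ring
            show Real.exp (-((n:ℝ) * (H1of P + δseq n))) ≤ ∏ t, pXof P ((z t).1)
            rw [hprod, h2]
            apply Real.exp_le_exp.2
            have hexp : (n:ℝ) * (H1of P + δseq n) = n * H1of P + n * δseq n := by ring
            rw [hexp]
            linarith [habs1.2]
          · refine ⟨fun t => hpos t, ?_⟩
            show (n:ℝ) * (klD (qof P) (qof Pb) - δseq n) ≤ ∑ t, L1f P Pb (z t)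
            have hexp : (n:ℝ) * (klD (qof P) (qof Pb) - δseq n)
                = n * klD (qof P) (qof Pb) - n * δseq n := by ring
            rw [hexp]
            linarith [habs2.1]
    · exact Or.inl hpos
  calc PrE (qof P) n (fun z => ¬ A1ev P Pb n z)
      ≤ PrE (qof P) n (fun z => ¬ ∀ t, 0 < qof P (z t))
        + PrE (qof P) n (fun z =>
            ((n:ℝ) * δseq n ≤ |∑ t, g1f P (z t) - n * (∑ d, qof P d * g1f P d)|) ∨
            ((n:ℝ) * δseq n ≤ |∑ t, L1f P Pb (z t) - n * (∑ d, qof P d * L1f P Pb d)|)) :=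
        PrE_subadd hq0 hsplit
    _ ≤ 0 + (PrE (qof P) n (fun z =>
            (n:ℝ) * δseq n ≤ |∑ t, g1f P (z t) - n * (∑ d, qof P d * g1f P d)|)
        + PrE (qof P) n (fun z =>
            (n:ℝ) * δseq n ≤ |∑ t, L1f P Pb (z t) - n * (∑ d, qof P d * L1f P Pb d)|)) := by
        rw [PrE_null hq0 n]
        gcongr
        exact PrE_subadd hq0 fun z h => h
    _ ≤ chebBd (Vq P (g1f P)) n + chebBd (Vq P (L1f P Pb)) n := by
        rw [zero_add]
        gcongr
        · exact cheb hq0 hq1 (g1f P) (by positivity)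
        · exact cheb hq0 hq1 (L1f P Pb) (by positivity)

lemma beta1_ub (P Pb : 𝒳 × 𝒴₁ × 𝒴₂ → ℝ) (hP0 : ∀ e, 0 ≤ P e) (hP1 : ∑ e, P e = 1)
    [Nonempty 𝒴₂] (hbpos : ∀ e, 0 < Pb e) (n : ℕ) :
    β1 Pb (achScheme P Pb n)
      ≤ Real.exp (-((n:ℝ) * (klD (qof P) (qof Pb) - δseq n))) := by
  rw [beta1_eq]
  exact PrE_change_upper (qof_nonneg hP0) (sum_qof P hP1) (qof_pos hbpos)
    (fun z hz => ⟨fun t => hz.2.1 t, hz.2.2⟩)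

lemma beta2_ub (P Pb : 𝒳 × 𝒴₁ × 𝒴₂ → ℝ) (hP0 : ∀ e, 0 ≤ P e) (hP1 : ∑ e, P e = 1)
    (hbpos : ∀ e, 0 < Pb e) (n : ℕ) :
    β2 Pb (achScheme P Pb n) ≤ Real.exp (-((n:ℝ) * (klD P Pb - δseq n))) := by
  rw [beta2_eq P Pb hP0]
  exact PrE_change_upper hP0 hP1 hbpos
    (fun z hz => ⟨fun t => hz.2.2.1 t, hz.2.2.2⟩)

lemma alpha2_bound (P Pb : 𝒳 × 𝒴₁ × 𝒴₂ → ℝ) (hP0 : ∀ e, 0 ≤ P e) (hP1 : ∑ e, P e = 1)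
    {n : ℕ} (hn : 1 ≤ n) :
    α2 P (achScheme P Pb n)
      ≤ chebBd (Vt P (g1t P)) n + (chebBd (Vt P (g2t P)) n + chebBd (Vt P (L2f P Pb)) n) := by
  have hn0 : (0:ℝ) < n := by exact_mod_cast hn
  have hδ := δseq_pos hn
  rw [alpha2_eq P Pb hP0]
  have hsplit : ∀ z : Fin n → 𝒳 × 𝒴₁ × 𝒴₂, ¬ A2ev P Pb n z →
      (¬ ∀ t, 0 < P (z t)) ∨
      (((n:ℝ) * δseq n ≤ |∑ t, g1t P (z t) - n * (∑ e, P e * g1t P e)|) ∨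
       (((n:ℝ) * δseq n ≤ |∑ t, g2t P (z t) - n * (∑ e, P e * g2t P e)|) ∨
        ((n:ℝ) * δseq n ≤ |∑ t, L2f P Pb (z t) - n * (∑ e, P e * L2f P Pb e)|))) := by
    intro z hz
    by_cases hpos : ∀ t, 0 < P (z t)
    · by_cases hb1 : (n:ℝ) * δseq n ≤ |∑ t, g1t P (z t) - n * (∑ e, P e * g1t P e)|
      · exact Or.inr (Or.inl hb1)
      · by_cases hb2 : (n:ℝ) * δseq n ≤ |∑ t, g2t P (z t) - n * (∑ e, P e * g2t P e)|
        · exact Or.inr (Or.inr (Or.inl hb2))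
        · by_cases hb3 : (n:ℝ) * δseq n
              ≤ |∑ t, L2f P Pb (z t) - n * (∑ e, P e * L2f P Pb e)|
          · exact Or.inr (Or.inr (Or.inr hb3))
          · exfalso
            apply hz
            push_neg at hb1 hb2 hb3
            rw [g1t_mean] at hb1
            rw [g2t_mean] at hb2
            rw [L2f_mean] at hb3
            have habs1 := abs_lt.1 hb1
            have habs2 := abs_lt.1 hb2
            have habs3 := abs_lt.1 hb3
            have hq : ∀ t, 0 < qof P ((z t).1, (z t).2.1) := by
              intro t
              have h := hpos t
              exact lt_of_lt_of_le h (P_le_qof hP0 (z t).1 (z t).2.1 (z t).2.2)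
            have hpX : ∀ t, 0 < pXof P ((z t).1) :=
              fun t => lt_of_lt_of_le (hq t) (qof_le_pXof hP0 (z t).1 (z t).2.1)
            refine ⟨?_, ?_, ?_⟩
            · rw [T1, Finset.mem_filter]
              refine ⟨mem_univ _, ?_⟩
              have hprod : ∏ t, pXof P ((z t).1)
                  = Real.exp (∑ t, Real.log (pXof P ((z t).1))) := by
                rw [Real.exp_sum]
                exact Finset.prod_congr rfl fun t _ => (Real.exp_log (hpX t)).symm
              have h2 : ∑ t, Real.log (pXof P ((z t).1)) = -∑ t, g1t P (z t) := by
                rw [← Finset.sum_neg_distrib]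
                exact Finset.sum_congr rfl fun t _ => by unfold g1t g1f; ring
              show Real.exp (-((n:ℝ) * (H1of P + δseq n))) ≤ ∏ t, pXof P ((z t).1)
              rw [hprod, h2]
              apply Real.exp_le_exp.2
              have hexp : (n:ℝ) * (H1of P + δseq n) = n * H1of P + n * δseq n := by ring
              rw [hexp]
              linarith [habs1.2]
            · rw [T2, Finset.mem_filter]
              refine ⟨mem_univ _, ?_⟩
              have hw : ∀ t, 0 < wof P ((z t).1, (z t).2.1) := by
                intro t
                exact div_pos (hq t) (hpX t)
              have hprod : ∏ t, wof P ((z t).1, (z t).2.1)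
                  = Real.exp (∑ t, Real.log (wof P ((z t).1, (z t).2.1))) := by
                rw [Real.exp_sum]
                exact Finset.prod_congr rfl fun t _ => (Real.exp_log (hw t)).symm
              have h2 : ∑ t, Real.log (wof P ((z t).1, (z t).2.1)) = -∑ t, g2t P (z t) := by
                rw [← Finset.sum_neg_distrib]
                exact Finset.sum_congr rfl fun t _ => by unfold g2t g2f; ring
              show Real.exp (-((n:ℝ) * (H2of P + δseq n)))
                ≤ ∏ t, wof P ((z t).1, (z t).2.1)
              rw [hprod, h2]
              apply Real.exp_le_exp.2
              have hexp : (n:ℝ) * (H2of P + δseq n) = n * H2of P + n * δseq n := by ring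
              rw [hexp]
              linarith [habs2.2]
            · refine ⟨fun t => hpos t, ?_⟩
              show (n:ℝ) * (klD P Pb - δseq n) ≤ ∑ t, L2f P Pb (z t)
              have hexp : (n:ℝ) * (klD P Pb - δseq n) = n * klD P Pb - n * δseq n := by
                ring
              rw [hexp]
              linarith [habs3.1]
    · exact Or.inl hpos
  calc PrE P n (fun z => ¬ A2ev P Pb n z)
      ≤ PrE P n (fun z => ¬ ∀ t, 0 < P (z t))
        + PrE P n (fun z =>
            ((n:ℝ) * δseq n ≤ |∑ t, g1t P (z t) - n * (∑ e, P e * g1t P e)|) ∨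
            (((n:ℝ) * δseq n ≤ |∑ t, g2t P (z t) - n * (∑ e, P e * g2t P e)|) ∨
             ((n:ℝ) * δseq n ≤ |∑ t, L2f P Pb (z t) - n * (∑ e, P e * L2f P Pb e)|))) :=
        PrE_subadd hP0 hsplit
    _ ≤ 0 + (PrE P n (fun z =>
            (n:ℝ) * δseq n ≤ |∑ t, g1t P (z t) - n * (∑ e, P e * g1t P e)|)
        + (PrE P n (fun z =>
            (n:ℝ) * δseq n ≤ |∑ t, g2t P (z t) - n * (∑ e, P e * g2t P e)|)
          + PrE P n (fun z =>
            (n:ℝ) * δseq n ≤ |∑ t, L2f P Pb (z t) - n * (∑ e, P e * L2f P Pb e)|))) := by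
        rw [PrE_null hP0 n]
        gcongr
        refine (PrE_subadd hP0 fun z h => h).trans ?_
        gcongr
        exact PrE_subadd hP0 fun z h => h
    _ ≤ chebBd (Vt P (g1t P)) n + (chebBd (Vt P (g2t P)) n + chebBd (Vt P (L2f P Pb)) n) := by
        rw [zero_add]
        gcongr
        · exact cheb hP0 hP1 (g1t P) (by positivity)
        · exact cheb hP0 hP1 (g2t P) (by positivity)
        · exact cheb hP0 hP1 (L2f P Pb) (by positivity)

lemma rate_bound {m : ℕ → ℕ} {K H : ℝ} (hK : 1 ≤ K) (hm1 : ∀ n, 1 ≤ m n)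
    (hm : ∀ n, 1 ≤ n → ((m n : ℝ)) ≤ K * Real.exp ((n:ℝ) * (H + δseq n))) :
    Filter.limsup (fun n : ℕ => (1/(n:ℝ)) * Real.log (m n)) Filter.atTop ≤ H := by
  have hK0 : (0:ℝ) < K := lt_of_lt_of_le one_pos hK
  apply limsup_le_of_ev (L := 0)
  · refine Filter.Eventually.of_forall fun n => ?_
    have h1 : (1:ℝ) ≤ (m n : ℝ) := by exact_mod_cast hm1 n
    exact mul_nonneg (by positivity) (Real.log_nonneg h1)
  · intro ε hε
    have t1 : Filter.Tendsto (fun n : ℕ => Real.log K * (1/(n:ℝ))) Filter.atTop (nhds 0) := by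
      have := tendsto_one_div_atTop_nhds_zero_nat.const_mul (Real.log K)
      simpa using this
    have ev1 : ∀ᶠ (n : ℕ) in Filter.atTop, Real.log K * (1/(n:ℝ)) ≤ ε/2 :=
      (t1.eventually_lt_const (half_pos hε)).mono fun n h => h.le
    have ev2 : ∀ᶠ (n : ℕ) in Filter.atTop, δseq n ≤ ε/2 :=
      (tendsto_δseq.eventually_lt_const (half_pos hε)).mono fun n h => h.le
    filter_upwards [ev1, ev2, Filter.eventually_ge_atTop 1] with n h1 h2 h3
    have hn0 : (0:ℝ) < n := by exact_mod_cast h3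
    have hmn : (0:ℝ) < (m n : ℝ) := by exact_mod_cast hm1 n
    have hlog : Real.log (m n) ≤ Real.log K + (n:ℝ) * (H + δseq n) := by
      have hle := Real.log_le_log hmn (hm n h3)
      rwa [Real.log_mul hK0.ne' (Real.exp_ne_zero _), Real.log_exp] at hle
    have hmul : (1/(n:ℝ)) * Real.log (m n)
        ≤ (1/(n:ℝ)) * (Real.log K + (n:ℝ) * (H + δseq n)) :=
      mul_le_mul_of_nonneg_left hlog (by positivity)
    have heq : (1/(n:ℝ)) * (Real.log K + (n:ℝ) * (H + δseq n))
        = Real.log K * (1/(n:ℝ)) + (H + δseq n) := by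
      field_simp
    rw [heq] at hmul
    linarith

lemma liminf_ge_of {βs : ℕ → ℝ} {D m0 : ℝ} (hm0 : 0 < m0)
    (hub : ∀ᶠ (n : ℕ) in Filter.atTop, βs n ≤ Real.exp (-((n:ℝ) * (D - δseq n))))
    (hlb : ∀ᶠ (n : ℕ) in Filter.atTop, m0 ^ n ≤ βs n)
    {θ : ℝ} (hθD : θ ≤ D) :
    θ ≤ Filter.liminf (fun n : ℕ => -(1/(n:ℝ)) * Real.log (βs n)) Filter.atTop := by
  apply le_liminf_of_ev (C := -Real.log m0)
  · filter_upwards [hlb, Filter.eventually_ge_atTop 1] with n h1 h3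
    have hn0 : (0:ℝ) < n := by exact_mod_cast h3
    have hβ0 : 0 < βs n := lt_of_lt_of_le (pow_pos hm0 n) h1
    have hlog : (n:ℝ) * Real.log m0 ≤ Real.log (βs n) := by
      have := Real.log_le_log (pow_pos hm0 n) h1
      rwa [Real.log_pow] at this
    have hmul := mul_le_mul_of_nonpos_left hlog
      (neg_nonpos_of_nonneg (by positivity : (0:ℝ) ≤ 1/(n:ℝ)))
    have heq : -(1/(n:ℝ)) * ((n:ℝ) * Real.log m0) = -Real.log m0 := by
      field_simp
    linarith
  · intro c hc
    have ev2 : ∀ᶠ (n : ℕ) in Filter.atTop, δseq n < D - c :=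
      tendsto_δseq.eventually_lt_const (by linarith)
    filter_upwards [hub, hlb, ev2, Filter.eventually_ge_atTop 1] with n h1 h2 h3 h4
    have hn0 : (0:ℝ) < n := by exact_mod_cast h4
    have hβ0 : 0 < βs n := lt_of_lt_of_le (pow_pos hm0 n) h2
    have hlog : Real.log (βs n) ≤ -((n:ℝ) * (D - δseq n)) := by
      have := Real.log_le_log hβ0 h1
      rwa [Real.log_exp] at this
    have hmul := mul_le_mul_of_nonpos_left hlog
      (neg_nonpos_of_nonneg (by positivity : (0:ℝ) ≤ 1/(n:ℝ)))
    have heq : -(1/(n:ℝ)) * (-((n:ℝ) * (D - δseq n))) = D - δseq n := by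
      field_simp
    rw [heq] at hmul
    linarith

end Ach

end HTAux

/-- If `R₁ ≥ H(X)` and `R₂ ≥ H(Y₁|X)`, the error-exponents region
is exactly `{(θ₁,θ₂) : 0 ≤ θ₁ ≤ D(P_{XY₁}‖P̄_{XY₁}), 0 ≤ θ₂ ≤ D(P‖P̄)}`
(rates and exponents in nats). -/
theorem stmt_10 {𝒳 𝒴₁ 𝒴₂ : Type*} [Fintype 𝒳] [Fintype 𝒴₁] [Fintype 𝒴₂]
    (P Pb : 𝒳 × 𝒴₁ × 𝒴₂ → ℝ) (hP : IsPMF P) (hPb : IsPMF Pb) (hpos : ∀ a, 0 < Pb a)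
    (R₁ R₂ : ℝ)
    (hR₁ : R₁ ≥ pmfEnt (fun x : 𝒳 => ∑ y1, ∑ y2, P (x, y1, y2)))
    (hR₂ : R₂ ≥ pmfEnt (fun xy : 𝒳 × 𝒴₁ => ∑ y2, P (xy.1, xy.2, y2))
        - pmfEnt (fun x : 𝒳 => ∑ y1, ∑ y2, P (x, y1, y2)))
    (ε₁ ε₂ : ℝ) (hε₁ : ε₁ ∈ Set.Ioo (0:ℝ) 1) (hε₂ : ε₂ ∈ Set.Ioo (0:ℝ) 1)
    (θ₁ θ₂ : ℝ) (hθ₁ : 0 ≤ θ₁) (hθ₂ : 0 ≤ θ₂) :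
    Achievable P Pb R₁ R₂ ε₁ ε₂ θ₁ θ₂
      ↔ (θ₁ ≤ klD (fun xy : 𝒳 × 𝒴₁ => ∑ y2, P (xy.1, xy.2, y2))
              (fun xy : 𝒳 × 𝒴₁ => ∑ y2, Pb (xy.1, xy.2, y2))
          ∧ θ₂ ≤ klD P Pb) := by
  classical
  obtain ⟨hP0, hP1⟩ := hP
  obtain ⟨hPb0, hPb1⟩ := hPb
  have hne : Nonempty (𝒳 × 𝒴₁ × 𝒴₂) := by
    by_contra h
    rw [not_nonempty_iff] at h
    rw [Finset.univ_eq_empty, Finset.sum_empty] at hP1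
    norm_num at hP1
  obtain ⟨⟨a0, b0, c0⟩⟩ := hne
  haveI h𝒴₂ : Nonempty 𝒴₂ := ⟨c0⟩
  have hq0 : ∀ d, 0 ≤ HTAux.qof P d := HTAux.qof_nonneg hP0
  have hq1 : ∑ d, HTAux.qof P d = 1 := HTAux.sum_qof P hP1
  have hqb1 : ∑ d, HTAux.qof Pb d = 1 := HTAux.sum_qof Pb hPb1
  have hqbpos : ∀ d, 0 < HTAux.qof Pb d := HTAux.qof_pos hpos
  have hkl1 : 0 ≤ klD (HTAux.qof P) (HTAux.qof Pb) :=
    HTAux.klD_nonneg hq0 hq1 hqbpos hqb1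
  have hkl2 : 0 ≤ klD P Pb := HTAux.klD_nonneg hP0 hP1 hpos hPb1
  constructor
  · rintro ⟨S, hα1, hα2, hβ1, hβ2, hr1, hr2⟩
    constructor
    · refine HTAux.converse_bound hq0 hq1 hqbpos hε₁.2 hθ₁ hkl1
        (fun n z => dec1 (S n) (fun t => (z t).1) (fun t => (z t).2) = false) ?_ ?_
      · have he : (fun n : ℕ => HTAux.PrE (HTAux.qof P) n
            (fun z => ¬ (dec1 (S n) (fun t => (z t).1) (fun t => (z t).2) = false)))
            = fun n : ℕ => α1 P (S n) := by
          funext n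
          rw [show α1 P (S n) = prn P n (fun x y1 _ => dec1 (S n) x y1 = true) from rfl,
            HTAux.bridge1]
          exact HTAux.PrE_congr fun z => by
            rcases Bool.eq_false_or_eq_true
              (dec1 (S n) (fun t => (z t).1) (fun t => (z t).2)) with hb | hb <;> simp [hb]
        rw [he]
        exact hα1
      · have he : (fun n : ℕ => -(1/(n:ℝ)) * Real.log (HTAux.PrE (HTAux.qof Pb) n
            (fun z => dec1 (S n) (fun t => (z t).1) (fun t => (z t).2) = false)))
            = fun n : ℕ => -(1/(n:ℝ)) * Real.log (β1 Pb (S n)) := by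
          funext n
          rw [show β1 Pb (S n) = prn Pb n (fun x y1 _ => dec1 (S n) x y1 = false) from rfl,
            HTAux.bridge1]
        rw [he]
        exact hβ1
    · refine HTAux.converse_bound hP0 hP1 hpos hε₂.2 hθ₂ hkl2
        (fun n z => dec2 (S n) (fun t => (z t).1) (fun t => (z t).2.1)
          (fun t => (z t).2.2) = false) ?_ ?_
      · have he : (fun n : ℕ => HTAux.PrE P n
            (fun z => ¬ (dec2 (S n) (fun t => (z t).1) (fun t => (z t).2.1)
              (fun t => (z t).2.2) = false)))
            = fun n : ℕ => α2 P (S n) := by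
          funext n
          rw [show α2 P (S n) = prn P n (fun x y1 y2 => dec2 (S n) x y1 y2 = true) from rfl,
            HTAux.bridge2]
          exact HTAux.PrE_congr fun z => by
            rcases Bool.eq_false_or_eq_true (dec2 (S n) (fun t => (z t).1)
              (fun t => (z t).2.1) (fun t => (z t).2.2)) with hb | hb <;> simp [hb]
        rw [he]
        exact hα2
      · have he : (fun n : ℕ => -(1/(n:ℝ)) * Real.log (HTAux.PrE Pb n
            (fun z => dec2 (S n) (fun t => (z t).1) (fun t => (z t).2.1)
              (fun t => (z t).2.2) = false)))
            = fun n : ℕ => -(1/(n:ℝ)) * Real.log (β2 Pb (S n)) := by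
          funext n
          rw [show β2 Pb (S n) = prn Pb n (fun x y1 y2 => dec2 (S n) x y1 y2 = false)
            from rfl, HTAux.bridge2]
        rw [he]
        exact hβ2
  · rintro ⟨hD1, hD2⟩
    have hD1' : θ₁ ≤ klD (HTAux.qof P) (HTAux.qof Pb) := hD1
    have hD2' : θ₂ ≤ klD P Pb := hD2
    -- tendsto of type-I errors
    have htend1 : Filter.Tendsto (fun n : ℕ => α1 P (HTAux.achScheme P Pb n))
        Filter.atTop (nhds 0) := by
      have hbd : Filter.Tendsto (fun n : ℕ => HTAux.chebBd (HTAux.Vq P (HTAux.g1f P)) n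
          + HTAux.chebBd (HTAux.Vq P (HTAux.L1f P Pb)) n) Filter.atTop (nhds 0) := by
        have := (HTAux.tendsto_chebBd (HTAux.Vq P (HTAux.g1f P))).add
          (HTAux.tendsto_chebBd (HTAux.Vq P (HTAux.L1f P Pb)))
        simpa using this
      apply squeeze_zero'
      · refine Filter.Eventually.of_forall fun n => ?_
        rw [HTAux.alpha1_eq]
        exact HTAux.PrE_nonneg hq0 n _
      · filter_upwards [Filter.eventually_ge_atTop 1] with n hn
        exact HTAux.alpha1_bound P Pb hP0 hP1 hn
      · exact hbd
    have htend2 : Filter.Tendsto (fun n : ℕ => α2 P (HTAux.achScheme P Pb n))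
        Filter.atTop (nhds 0) := by
      have hbd : Filter.Tendsto (fun n : ℕ => HTAux.chebBd (HTAux.Vt P (HTAux.g1t P)) n
          + (HTAux.chebBd (HTAux.Vt P (HTAux.g2t P)) n
            + HTAux.chebBd (HTAux.Vt P (HTAux.L2f P Pb)) n)) Filter.atTop (nhds 0) := by
        have := (HTAux.tendsto_chebBd (HTAux.Vt P (HTAux.g1t P))).add
          ((HTAux.tendsto_chebBd (HTAux.Vt P (HTAux.g2t P))).add
            (HTAux.tendsto_chebBd (HTAux.Vt P (HTAux.L2f P Pb))))
        simpa using this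
      apply squeeze_zero'
      · refine Filter.Eventually.of_forall fun n => ?_
        rw [HTAux.alpha2_eq P Pb hP0]
        exact HTAux.PrE_nonneg hP0 n _
      · filter_upwards [Filter.eventually_ge_atTop 1] with n hn
        exact HTAux.alpha2_bound P Pb hP0 hP1 hn
      · exact hbd
    refine ⟨fun n => HTAux.achScheme P Pb n, ?_, ?_, ?_, ?_, ?_, ?_⟩
    · rw [htend1.limsup_eq]
      exact hε₁.1.le
    · rw [htend2.limsup_eq]
      exact hε₂.1.le
    · -- β1 exponent
      obtain ⟨d0, _, hd0⟩ := Finset.exists_min_image univ (HTAux.qof Pb)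
        ⟨(a0, b0), mem_univ _⟩
      have hm0 : 0 < HTAux.qof Pb d0 := hqbpos d0
      apply HTAux.liminf_ge_of hm0 ?_ ?_ hD1'
      · exact Filter.Eventually.of_forall fun n => HTAux.beta1_ub P Pb hP0 hP1 hpos n
      · filter_upwards [htend1.eventually_lt_const (by norm_num : (0:ℝ) < 1)] with n hn
        have hcompl := HTAux.PrE_compl hq1 (p := HTAux.qof P) (HTAux.A1ev P Pb n)
        have hPrA : 0 < HTAux.PrE (HTAux.qof P) n (HTAux.A1ev P Pb n) := by
          have : α1 P (HTAux.achScheme P Pb n)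
              = HTAux.PrE (HTAux.qof P) n (fun z => ¬ HTAux.A1ev P Pb n z) :=
            HTAux.alpha1_eq P Pb n
          rw [this] at hn
          linarith
        obtain ⟨z, hz⟩ := HTAux.PrE_exists_of_pos hPrA
        calc HTAux.qof Pb d0 ^ n ≤ HTAux.Pw (HTAux.qof Pb) z :=
              HTAux.Pw_ge_pow hm0.le (fun d => hd0 d (mem_univ d)) z
          _ ≤ HTAux.PrE (HTAux.qof Pb) n (HTAux.A1ev P Pb n) :=
              HTAux.PrE_ge_single (fun d => (hqbpos d).le) hz
          _ = β1 Pb (HTAux.achScheme P Pb n) := (HTAux.beta1_eq P Pb n).symm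
    · -- β2 exponent
      obtain ⟨e0, _, he0⟩ := Finset.exists_min_image univ Pb ⟨(a0, b0, c0), mem_univ _⟩
      have hm0 : 0 < Pb e0 := hpos e0
      apply HTAux.liminf_ge_of hm0 ?_ ?_ hD2'
      · exact Filter.Eventually.of_forall fun n => HTAux.beta2_ub P Pb hP0 hP1 hpos n
      · filter_upwards [htend2.eventually_lt_const (by norm_num : (0:ℝ) < 1)] with n hn
        have hcompl := HTAux.PrE_compl hP1 (p := P) (HTAux.A2ev P Pb n)
        have hPrA : 0 < HTAux.PrE P n (HTAux.A2ev P Pb n) := by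
          have : α2 P (HTAux.achScheme P Pb n)
              = HTAux.PrE P n (fun z => ¬ HTAux.A2ev P Pb n z) :=
            HTAux.alpha2_eq P Pb hP0 n
          rw [this] at hn
          linarith
        obtain ⟨z, hz⟩ := HTAux.PrE_exists_of_pos hPrA
        calc Pb e0 ^ n ≤ HTAux.Pw Pb z :=
              HTAux.Pw_ge_pow hm0.le (fun e => he0 e (mem_univ e)) z
          _ ≤ HTAux.PrE Pb n (HTAux.A2ev P Pb n) :=
              HTAux.PrE_ge_single (fun e => (hpos e).le) hz
          _ = β2 Pb (HTAux.achScheme P Pb n) := (HTAux.beta2_eq P Pb hP0 n).symm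
    · -- rate 1
      have hpX0 : ∀ a, 0 ≤ HTAux.pXof P a := HTAux.pXof_nonneg hP0
      have hpX1 : ∑ a, HTAux.pXof P a = 1 := HTAux.sum_pXof P hP1
      have hH1 : 0 ≤ HTAux.H1of P := by
        rw [HTAux.H1of_eq]
        exact HTAux.entropy_nonneg hpX0 hpX1
      have hlim := HTAux.rate_bound (m := fun n => (HTAux.achScheme P Pb n).m₁)
        (K := (2:ℝ)) (H := HTAux.H1of P) (by norm_num)
        (fun n => Nat.succ_le_succ (Nat.zero_le _)) ?_
      · refine hlim.trans ?_
        rw [HTAux.H1of_eq]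
        exact hR₁
      · intro n hn
        have hexp1 : (1:ℝ) ≤ Real.exp ((n:ℝ) * (HTAux.H1of P + HTAux.δseq n)) := by
          rw [Real.one_le_exp_iff]
          have := HTAux.δseq_nonneg n
          positivity
        have hcard := HTAux.card_T1_le hP0 hP1 n
        have : ((HTAux.achScheme P Pb n).m₁ : ℝ) = ((HTAux.T1 P n).card : ℝ) + 1 := by
          norm_cast
        rw [this]
        linarith
    · -- rate 2
      have hH2 : 0 ≤ HTAux.H2of P := HTAux.H2of_nonneg hP0
      have hlim := HTAux.rate_bound (m := fun n => (HTAux.achScheme P Pb n).m₂)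
        (K := (3:ℝ)) (H := HTAux.H2of P) (by norm_num)
        (fun n => Nat.succ_le_succ (Nat.zero_le _)) ?_
      · refine hlim.trans ?_
        have heq := HTAux.H2of_eq hP0
        rw [heq]
        exact hR₂
      · intro n hn
        have hexp1 : (1:ℝ) ≤ Real.exp ((n:ℝ) * (HTAux.H2of P + HTAux.δseq n)) := by
          rw [Real.one_le_exp_iff]
          have := HTAux.δseq_nonneg n
          positivity
        have hceil : ((HTAux.N2of P n : ℕ) : ℝ)
            ≤ Real.exp ((n:ℝ) * (HTAux.H2of P + HTAux.δseq n)) + 1 := by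
          have := Nat.ceil_lt_add_one
            (le_of_lt (Real.exp_pos ((n:ℝ) * (HTAux.H2of P + HTAux.δseq n))))
          exact le_of_lt this
        have : ((HTAux.achScheme P Pb n).m₂ : ℝ) = ((HTAux.N2of P n : ℕ) : ℝ) + 1 := by
          norm_cast
        rw [this]
        linarith
end
end
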